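/- arXiv:2402.10919 — 4 statements merged into one kernel-verified Lean document; each statement's English description precedes it below -/
import Mathlib

section
/- In the Artin group A[B_{n+1}] with ρ = r_1 ⋯ r_{n+1} and r_0 := ρ r_n ρ^{-1}, one has ρ^2 r_n ρ^{-2} = r_1; consequently conjugation by ρ permutes the elements r_0, r_1, ..., r_n cyclically: ρ r_i ρ^{-1} = r_{i+1 mod n+1} for all 0 ≤ i ≤ n. -/
/-- Defining relations of the Artin group of type `B_{n+1}` on generators indexed by
`Fin (n+1)`; index `i` represents the paper's generator `r_{i+1}`. -/
def BRels (n : ℕ) : Set (FreeGroup (Fin (n + 1))) :=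
  { x | ∃ i j : Fin (n + 1), (i : ℕ) + 1 = j ∧ (j : ℕ) < n ∧
      x = .of i * .of j * .of i * (.of j * .of i * .of j)⁻¹ } ∪
  { x | n ≥ 1 ∧ x = .of (⟨n - 1, by omega⟩ : Fin (n + 1)) * .of ⟨n, by omega⟩ *
      .of ⟨n - 1, by omega⟩ * .of ⟨n, by omega⟩ *
      (.of (⟨n, by omega⟩ : Fin (n + 1)) * .of ⟨n - 1, by omega⟩ *
        .of ⟨n, by omega⟩ * .of ⟨n - 1, by omega⟩)⁻¹ } ∪
  { x | ∃ i j : Fin (n + 1), (i : ℕ) + 2 ≤ j ∧ x = .of i * .of j * (.of j * .of i)⁻¹ }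

/-- The Artin group of type `B_{n+1}`. -/
abbrev ArtinB (n : ℕ) := PresentedGroup (BRels n)

/-- The standard generator `r_{i+1}` of `A[B_{n+1}]`. -/
def rB (n : ℕ) (i : Fin (n + 1)) : ArtinB n := PresentedGroup.of i

/-- `ρ = r_1 r_2 ⋯ r_{n+1}`. -/
def ρB (n : ℕ) : ArtinB n := (List.ofFn fun i => rB n i).prod

/-- Defining relations of the Euclidean braid group `A[Ã_n]` on generators `t_0, …, t_n`
indexed cyclically by `Fin (n+1)`. -/
def ARels (n : ℕ) : Set (FreeGroup (Fin (n + 1))) :=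
  { x | ∃ i : Fin (n + 1), x = .of i * .of (i + 1) * .of i *
      (.of (i + 1) * .of i * .of (i + 1))⁻¹ } ∪
  { x | ∃ i j : Fin (n + 1), j ≠ i + 1 ∧ i ≠ j + 1 ∧ i ≠ j ∧
      x = .of i * .of j * (.of j * .of i)⁻¹ }

/-- The Euclidean braid group `A[Ã_n]`. -/
abbrev ArtinA (n : ℕ) := PresentedGroup (ARels n)

/-- The standard generator `t_i` of `A[Ã_n]`. -/
def tA (n : ℕ) (i : Fin (n + 1)) : ArtinA n := PresentedGroup.of i

/-- `r_0, r_1, …, r_n` in `A[B_{n+1}]`: for `i ≥ 1` this is the standard generator `r_i`,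
and `r_0 = ρ r_n ρ⁻¹`. -/
def rcyc (n : ℕ) (i : Fin (n + 1)) : ArtinB n :=
  if h : (i : ℕ) = 0 then ρB n * rB n ⟨n - 1, by omega⟩ * (ρB n)⁻¹
  else rB n ⟨(i : ℕ) - 1, by omega⟩

section Aux

variable {n : ℕ}

/-- Elements of `BRels` become trivial in the presented group. -/
lemma mk_relB (a b : FreeGroup (Fin (n + 1))) (h : a * b⁻¹ ∈ BRels n) :
    PresentedGroup.mk (BRels n) a = PresentedGroup.mk (BRels n) b := by
  have h1 : PresentedGroup.mk (BRels n) (a * b⁻¹) = 1 :=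
    (QuotientGroup.eq_one_iff _).2 (Subgroup.subset_normalClosure h)
  rw [map_mul, map_inv, mul_inv_eq_one] at h1
  exact h1

/-- Total version of the generators: `gB n j = r_{j+1}` for `j ≤ n`, junk otherwise. -/
def gB (n j : ℕ) : ArtinB n := if h : j ≤ n then rB n ⟨j, by omega⟩ else 1

lemma gB_eq (j : ℕ) (h : j ≤ n) : gB n j = rB n ⟨j, by omega⟩ := dif_pos h

lemma rB_mk (i : Fin (n + 1)) : rB n i = PresentedGroup.mk (BRels n) (FreeGroup.of i) := rfl

lemma braidB (k : ℕ) (h : k + 2 ≤ n) :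
    gB n k * (gB n (k + 1) * gB n k) = gB n (k + 1) * (gB n k * gB n (k + 1)) := by
  have hk : k ≤ n := by omega
  have hk1 : k + 1 ≤ n := by omega
  rw [gB_eq k hk, gB_eq (k + 1) hk1]
  set i : Fin (n + 1) := ⟨k, by omega⟩
  set j : Fin (n + 1) := ⟨k + 1, by omega⟩
  have hmem : (FreeGroup.of i * FreeGroup.of j * FreeGroup.of i) *
      (FreeGroup.of j * FreeGroup.of i * FreeGroup.of j)⁻¹ ∈ BRels n :=
    Or.inl (Or.inl ⟨i, j, rfl, by simpa [j] using (show k + 1 < n by omega), rfl⟩)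
  have := mk_relB _ _ hmem
  simp only [map_mul] at this
  simpa [rB_mk, mul_assoc] using this

lemma commB (j m : ℕ) (h2 : j + 2 ≤ m) (hm : m ≤ n) : gB n j * gB n m = gB n m * gB n j := by
  rw [gB_eq j (by omega), gB_eq m hm]
  set i : Fin (n + 1) := ⟨j, by omega⟩
  set l : Fin (n + 1) := ⟨m, by omega⟩
  have hmem : (FreeGroup.of i * FreeGroup.of l) * (FreeGroup.of l * FreeGroup.of i)⁻¹ ∈ BRels n :=
    Or.inr ⟨i, l, by simpa [i, l] using h2, rfl⟩
  have := mk_relB _ _ hmem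
  simp only [map_mul] at this
  simpa [rB_mk, mul_assoc] using this

lemma brelB (hn : 1 ≤ n) :
    gB n (n - 1) * (gB n n * (gB n (n - 1) * gB n n)) =
      gB n n * (gB n (n - 1) * (gB n n * gB n (n - 1))) := by
  rw [gB_eq (n - 1) (by omega), gB_eq n le_rfl]
  have hmem : (FreeGroup.of (⟨n - 1, by omega⟩ : Fin (n + 1)) * FreeGroup.of ⟨n, by omega⟩ *
      FreeGroup.of ⟨n - 1, by omega⟩ * FreeGroup.of ⟨n, by omega⟩) *
      (FreeGroup.of (⟨n, by omega⟩ : Fin (n + 1)) * FreeGroup.of ⟨n - 1, by omega⟩ *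
        FreeGroup.of ⟨n, by omega⟩ * FreeGroup.of ⟨n - 1, by omega⟩)⁻¹ ∈ BRels n :=
    Or.inl (Or.inr ⟨hn, rfl⟩)
  have := mk_relB _ _ hmem
  simp only [map_mul] at this
  simpa [rB_mk, mul_assoc] using this

/-- `Pfrom n j = g_j g_{j+1} ⋯ g_n` (suffix product). -/
def Pfrom (n j : ℕ) : ArtinB n :=
  if h : j ≤ n then gB n j * Pfrom n (j + 1) else 1
termination_by n + 1 - j

lemma Pfrom_of_le {j : ℕ} (h : j ≤ n) : Pfrom n j = gB n j * Pfrom n (j + 1) := by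
  rw [Pfrom, dif_pos h]

lemma Pfrom_of_gt {j : ℕ} (h : n < j) : Pfrom n j = 1 := by
  rw [Pfrom, dif_neg (by omega)]

/-- `Qto n j = g_0 g_1 ⋯ g_{j-1}` (prefix product). -/
def Qto (n : ℕ) : ℕ → ArtinB n
  | 0 => 1
  | j + 1 => Qto n j * gB n j

lemma splitB : ∀ j, j ≤ n + 1 → Qto n j * Pfrom n j = Pfrom n 0 := by
  intro j
  induction j with
  | zero => intro _; simp [Qto]
  | succ j ih =>
    intro h
    have hj : j ≤ n := by omega
    rw [Qto, mul_assoc, ← Pfrom_of_le hj]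
    exact ih (by omega)

lemma commP (j : ℕ) : ∀ m, j + 2 ≤ m → gB n j * Pfrom n m = Pfrom n m * gB n j := by
  suffices H : ∀ d m, n + 1 - m ≤ d → j + 2 ≤ m → gB n j * Pfrom n m = Pfrom n m * gB n j by
    exact fun m hm => H (n + 1 - m) m le_rfl hm
  intro d
  induction d with
  | zero => intro m hd _; rw [Pfrom_of_gt (by omega)]; simp
  | succ d ih =>
    intro m hd hm
    by_cases h : m ≤ n
    · rw [Pfrom_of_le h, ← mul_assoc, commB j m hm h, mul_assoc, ih (m + 1) (by omega) (by omega),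
        ← mul_assoc]
    · rw [Pfrom_of_gt (by omega)]; simp

lemma commQ (k : ℕ) (hk : k ≤ n) : ∀ j, j + 1 ≤ k → gB n k * Qto n j = Qto n j * gB n k := by
  intro j
  induction j with
  | zero => intro _; simp [Qto]
  | succ j ih =>
    intro h
    rw [Qto, ← mul_assoc, ih (by omega), mul_assoc, ← commB j k (by omega) hk, ← mul_assoc]

lemma ofFn_prod : ∀ k j, j + k = n + 1 →
    (List.ofFn fun i : Fin k => gB n (j + (i : ℕ))).prod = Pfrom n j := by
  intro k
  induction k with
  | zero => intro j h; rw [List.ofFn_zero, List.prod_nil, Pfrom_of_gt (by omega)]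
  | succ k ih =>
    intro j h
    rw [List.ofFn_succ, List.prod_cons]
    have hfn : (fun i : Fin k => gB n (j + ((i.succ : Fin (k + 1)) : ℕ))) =
        fun i : Fin k => gB n ((j + 1) + (i : ℕ)) := by
      funext i
      have hv : j + ((i.succ : Fin (k + 1)) : ℕ) = (j + 1) + (i : ℕ) := by
        rw [Fin.val_succ]; omega
      rw [hv]
    rw [hfn, ih (j + 1) (by omega)]
    simp only [Fin.val_zero, Nat.add_zero]
    exact (Pfrom_of_le (by omega)).symm

lemma rho_eq : ρB n = Pfrom n 0 := by
  have hfun : (fun i : Fin (n + 1) => rB n i) = fun i : Fin (n + 1) => gB n (0 + (i : ℕ)) := by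
    funext i
    rw [gB_eq (0 + (i : ℕ)) (by omega)]
    congr 1
    ext
    simp
  rw [ρB, hfun, ofFn_prod (n + 1) 0 (by omega)]

lemma keyP (hn : 1 ≤ n) : ∀ k, k ≤ n - 1 →
    Pfrom n (n - 1 - k) * (Pfrom n (n - 1 - k) * gB n (n - 1)) =
      gB n (n - 1 - k) * (Pfrom n (n - 1 - k) * Pfrom n (n - 1 - k)) := by
  intro k
  induction k with
  | zero =>
    intro _
    simp only [Nat.sub_zero]
    have hs : n - 1 + 1 = n := by omega
    rw [Pfrom_of_le (by omega : n - 1 ≤ n), hs, Pfrom_of_le le_rfl, Pfrom_of_gt (by omega)]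
    simp only [mul_one, mul_assoc]
    exact congrArg (fun t => gB n (n - 1) * t) (brelB hn).symm
  | succ k ih =>
    intro hk
    have hj2 : (n - 1 - (k + 1)) + 2 ≤ n := by omega
    set j := n - 1 - (k + 1) with hjdef
    have hstep : n - 1 - k = j + 1 := by omega
    have IH := ih (by omega)
    rw [hstep] at IH
    set a := gB n j
    set b := gB n (j + 1)
    set Q := Pfrom n (j + 2)
    set c := gB n (n - 1)
    have hPj : Pfrom n j = a * Pfrom n (j + 1) := Pfrom_of_le (by omega)
    have hPj1 : Pfrom n (j + 1) = b * Q := Pfrom_of_le (by omega)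
    have hAQ : a * Q = Q * a := commP j (j + 2) le_rfl
    have hQa : ∀ X, Q * (a * X) = a * (Q * X) := fun X => by
      rw [← mul_assoc, ← hAQ, mul_assoc]
    have braid : a * (b * a) = b * (a * b) := braidB j hj2
    have habraid : ∀ Z, a * (b * (a * Z)) = b * (a * (b * Z)) := fun Z => by
      calc a * (b * (a * Z)) = (a * (b * a)) * Z := by simp [mul_assoc]
        _ = (b * (a * b)) * Z := by rw [braid]
        _ = b * (a * (b * Z)) := by simp [mul_assoc]
    have h1 : Q * (b * (Q * c)) = b * (Q * (b * Q)) := by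
      have h' := IH
      rw [hPj1] at h'
      simp only [mul_assoc] at h'
      exact mul_left_cancel h'
    rw [hPj, hPj1]
    simp only [mul_assoc]
    rw [hQa, h1, hQa]
    conv_rhs => rw [habraid]

lemma rhoconjB (k : ℕ) (h : k + 2 ≤ n) :
    Pfrom n 0 * gB n k = gB n (k + 1) * Pfrom n 0 := by
  rw [← splitB (k + 2) (by omega)]
  set a := gB n k
  set b := gB n (k + 1)
  set Q := Pfrom n (k + 2)
  have hQ : Q * a = a * Q := (commP k (k + 2) le_rfl).symm
  have braid : a * (b * a) = b * (a * b) := braidB k h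
  have habraid : ∀ Z, a * (b * (a * Z)) = b * (a * (b * Z)) := fun Z => by
    calc a * (b * (a * Z)) = (a * (b * a)) * Z := by simp [mul_assoc]
      _ = (b * (a * b)) * Z := by rw [braid]
      _ = b * (a * (b * Z)) := by simp [mul_assoc]
  have hQto : Qto n (k + 2) = Qto n k * (a * b) := by
    rw [Qto, Qto, mul_assoc]
  have hcq : ∀ X, Qto n k * (b * X) = b * (Qto n k * X) := fun X => by
    rw [← mul_assoc, ← commQ (k + 1) (by omega) k (by omega), mul_assoc]
  rw [hQto]
  simp only [mul_assoc]
  rw [show Q * a = a * Q from hQ, habraid, hcq]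

end Aux

/-- `ρ² r_n ρ⁻² = r_1`, and conjugation by `ρ` permutes `r_0, r_1, …, r_n` cyclically. -/
theorem stmt1 (n : ℕ) (hn : 1 ≤ n) :
    (ρB n) ^ 2 * rB n ⟨n - 1, by omega⟩ * (ρB n) ^ (-2 : ℤ) = rB n ⟨0, by omega⟩ ∧
    ∀ i : Fin (n + 1), ρB n * rcyc n i * (ρB n)⁻¹ = rcyc n (i + 1) := by
  have hro : ρB n = Pfrom n 0 := rho_eq
  have key : Pfrom n 0 * (Pfrom n 0 * gB n (n - 1)) = gB n 0 * (Pfrom n 0 * Pfrom n 0) := by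
    have h := keyP hn (n - 1) le_rfl
    simpa using h
  have E2 : ρB n * (ρB n * rB n ⟨n - 1, by omega⟩) =
      rB n ⟨0, by omega⟩ * (ρB n * ρB n) := by
    rw [hro, ← gB_eq (n - 1) (by omega), ← gB_eq 0 (by omega)]
    exact key
  have hz2 : (ρB n) ^ (-2 : ℤ) = ((ρB n) * (ρB n))⁻¹ := by
    rw [show (-2 : ℤ) = -(1 + 1) by norm_num, zpow_neg, zpow_add, zpow_one]
  have part1 : (ρB n) ^ 2 * rB n ⟨n - 1, by omega⟩ * (ρB n) ^ (-2 : ℤ) =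
      rB n ⟨0, by omega⟩ := by
    rw [pow_two, hz2, mul_inv_eq_iff_eq_mul]
    simp only [mul_assoc]
    exact E2
  refine ⟨part1, fun i => ?_⟩
  have hval : ((i + 1 : Fin (n + 1)) : ℕ) = ((i : ℕ) + 1) % (n + 1) := by
    rw [Fin.val_add, Fin.val_one']
    congr 1
    rw [Nat.mod_eq_of_lt (by omega)]
  by_cases h0 : (i : ℕ) = 0
  · have hv1 : ((i + 1 : Fin (n + 1)) : ℕ) = 1 := by
      rw [hval, h0, Nat.mod_eq_of_lt (by omega)]
    rw [rcyc, dif_pos h0, rcyc, dif_neg (by omega)]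
    rw [show (⟨((i + 1 : Fin (n + 1)) : ℕ) - 1, by omega⟩ : Fin (n + 1)) = ⟨0, by omega⟩ from
      Fin.ext (by simp [hv1])]
    calc ρB n * (ρB n * rB n ⟨n - 1, by omega⟩ * (ρB n)⁻¹) * (ρB n)⁻¹
        = (ρB n * (ρB n * rB n ⟨n - 1, by omega⟩)) * (ρB n * ρB n)⁻¹ := by group
      _ = (rB n ⟨0, by omega⟩ * (ρB n * ρB n)) * (ρB n * ρB n)⁻¹ := by rw [E2]
      _ = rB n ⟨0, by omega⟩ := by group
  · by_cases hn2 : (i : ℕ) = n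
    · have hv0 : ((i + 1 : Fin (n + 1)) : ℕ) = 0 := by
        rw [hval, hn2, Nat.mod_self]
      rw [rcyc, dif_neg h0, rcyc, dif_pos hv0]
      rw [show (⟨(i : ℕ) - 1, by omega⟩ : Fin (n + 1)) = ⟨n - 1, by omega⟩ from
        Fin.ext (by simp [hn2])]
    · have hv : ((i + 1 : Fin (n + 1)) : ℕ) = (i : ℕ) + 1 := by
        rw [hval, Nat.mod_eq_of_lt (by omega)]
      rw [rcyc, dif_neg h0, rcyc, dif_neg (by omega)]
      rw [show (⟨((i + 1 : Fin (n + 1)) : ℕ) - 1, by omega⟩ : Fin (n + 1)) =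
          ⟨(i : ℕ), by omega⟩ from Fin.ext (by simp [hv])]
      have hconj : Pfrom n 0 * gB n ((i : ℕ) - 1) =
          gB n ((i : ℕ) - 1 + 1) * Pfrom n 0 := rhoconjB ((i : ℕ) - 1) (by omega)
      have hi1 : (i : ℕ) - 1 + 1 = (i : ℕ) := by omega
      rw [hi1] at hconj
      have hgoal : ρB n * rB n ⟨(i : ℕ) - 1, by omega⟩ = rB n ⟨(i : ℕ), by omega⟩ * ρB n := by
        rw [hro, ← gB_eq ((i : ℕ) - 1) (by omega), ← gB_eq (i : ℕ) (by omega)]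
        exact hconj
      calc ρB n * rB n ⟨(i : ℕ) - 1, by omega⟩ * (ρB n)⁻¹
          = (rB n ⟨(i : ℕ), by omega⟩ * ρB n) * (ρB n)⁻¹ := by rw [hgoal]
        _ = rB n ⟨(i : ℕ), by omega⟩ := by group
end

section
/- There is a well-defined group homomorphism φ₀ : A[Ã_n] → A[B_{n+1}] sending t_i ↦ r_i for 1 ≤ i ≤ n and t_0 ↦ ρ r_n ρ^{-1}, where ρ = r_1⋯r_{n+1}. -/
section ConjAux
variable {G : Type*} [Group G]

lemma braid_conj (g a b : G) (h : a * b * a = b * a * b) :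
    (g * a * g⁻¹) * (g * b * g⁻¹) * (g * a * g⁻¹)
      = (g * b * g⁻¹) * (g * a * g⁻¹) * (g * b * g⁻¹) := by
  calc (g * a * g⁻¹) * (g * b * g⁻¹) * (g * a * g⁻¹) = g * (a * b * a) * g⁻¹ := by group
    _ = g * (b * a * b) * g⁻¹ := by rw [h]
    _ = (g * b * g⁻¹) * (g * a * g⁻¹) * (g * b * g⁻¹) := by group

lemma comm_conj (g a b : G) (h : a * b = b * a) :
    (g * a * g⁻¹) * (g * b * g⁻¹) = (g * b * g⁻¹) * (g * a * g⁻¹) := by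
  calc (g * a * g⁻¹) * (g * b * g⁻¹) = g * (a * b) * g⁻¹ := by group
    _ = g * (b * a) * g⁻¹ := by rw [h]
    _ = (g * b * g⁻¹) * (g * a * g⁻¹) := by group

end ConjAux

namespace Stmt6Aux

/-- total-function version of the generators -/
def σg (n k : ℕ) : ArtinB n := if h : k < n + 1 then rB n ⟨k, h⟩ else 1

/-- product `σ_a σ_{a+1} ⋯ σ_{a+m-1}` -/
def P (n a m : ℕ) : ArtinB n := ((List.range' a m).map (σg n)).prod

variable (n : ℕ)

lemma σg_eq (k : ℕ) (h : k < n + 1) : σg n k = rB n ⟨k, h⟩ := dif_pos h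

lemma relB {r : FreeGroup (Fin (n + 1))} (h : r ∈ BRels n) :
    PresentedGroup.mk (BRels n) r = 1 :=
  (QuotientGroup.eq_one_iff r).mpr (Subgroup.subset_normalClosure h)

lemma braidB {a b : ℕ} (hab : a + 1 = b) (h : b < n) :
    σg n a * σg n b * σg n a = σg n b * σg n a * σg n b := by
  have ha : a < n + 1 := by omega
  have hb : b < n + 1 := by omega
  have hm : (FreeGroup.of (⟨a, ha⟩ : Fin (n + 1)) * .of ⟨b, hb⟩ * .of ⟨a, ha⟩ *
      (.of (⟨b, hb⟩ : Fin (n + 1)) * .of ⟨a, ha⟩ * .of ⟨b, hb⟩)⁻¹) ∈ BRels n :=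
    Or.inl (Or.inl ⟨⟨a, ha⟩, ⟨b, hb⟩, hab, h, rfl⟩)
  have h1 := relB n hm
  rw [map_mul, map_mul, map_inv, map_mul, map_mul, mul_inv_eq_one] at h1
  rw [σg_eq n a ha, σg_eq n b hb]
  exact h1

lemma rel4B (hn : 1 ≤ n) :
    σg n (n - 1) * σg n n * σg n (n - 1) * σg n n
      = σg n n * σg n (n - 1) * σg n n * σg n (n - 1) := by
  have ha : n - 1 < n + 1 := by omega
  have hb : n < n + 1 := by omega
  have hm : (FreeGroup.of (⟨n - 1, by omega⟩ : Fin (n + 1)) * .of ⟨n, by omega⟩ *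
      .of ⟨n - 1, by omega⟩ * .of ⟨n, by omega⟩ *
      (.of (⟨n, by omega⟩ : Fin (n + 1)) * .of ⟨n - 1, by omega⟩ *
        .of ⟨n, by omega⟩ * .of ⟨n - 1, by omega⟩)⁻¹) ∈ BRels n :=
    Or.inl (Or.inr ⟨hn, rfl⟩)
  have h1 := relB n hm
  rw [map_mul, map_mul, map_mul, map_inv, map_mul, map_mul, map_mul, mul_inv_eq_one] at h1
  rw [σg_eq n (n - 1) ha, σg_eq n n hb]
  exact h1

lemma commB {a b : ℕ} (h : a + 2 ≤ b) : σg n a * σg n b = σg n b * σg n a := by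
  by_cases hb : b < n + 1
  · have ha : a < n + 1 := by omega
    have hm : (FreeGroup.of (⟨a, ha⟩ : Fin (n + 1)) * .of ⟨b, hb⟩ *
        (.of (⟨b, hb⟩ : Fin (n + 1)) * .of ⟨a, ha⟩)⁻¹) ∈ BRels n :=
      Or.inr ⟨⟨a, ha⟩, ⟨b, hb⟩, h, rfl⟩
    have h1 := relB n hm
    rw [map_mul, map_inv, map_mul, mul_inv_eq_one] at h1
    rw [σg_eq n a ha, σg_eq n b hb]
    exact h1
  · have : σg n b = 1 := dif_neg hb
    rw [this, mul_one, one_mul]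

lemma comm_P_right {a b m : ℕ} (h : a + 2 ≤ b) : Commute (σg n a) (P n b m) := by
  apply Commute.list_prod_right
  intro x hx
  simp only [List.mem_map, List.mem_range'_1] at hx
  obtain ⟨k, ⟨hk1, hk2⟩, rfl⟩ := hx
  exact commB n (by omega)

lemma comm_P_left {a b m : ℕ} (h : b + m < a) : Commute (σg n a) (P n b m) := by
  apply Commute.list_prod_right
  intro x hx
  simp only [List.mem_map, List.mem_range'_1] at hx
  obtain ⟨k, ⟨hk1, hk2⟩, rfl⟩ := hx
  exact (commB n (show k + 2 ≤ a by omega)).symm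

end Stmt6Aux

namespace Stmt6Aux
variable (n : ℕ)

lemma P_append (a m k : ℕ) : P n a (m + k) = P n a m * P n (a + m) k := by
  unfold P
  rw [← List.prod_append, ← List.map_append]
  congr 2
  have := @List.range'_append a m k 1
  simpa [Nat.add_comm] using this.symm

lemma P_one (a : ℕ) : P n a 1 = σg n a := by
  simp [P]

lemma P_succ_left (a m : ℕ) : P n a (m + 1) = σg n a * P n (a + 1) m := by
  rw [show m + 1 = 1 + m by omega, P_append, P_one]

lemma P_succ_right (a m : ℕ) : P n a (m + 1) = P n a m * σg n (a + m) := by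
  rw [P_append, P_one]

lemma ρB_eq : ρB n = P n 0 (n + 1) := by
  unfold ρB P
  have hfr : (List.finRange (n + 1)).map (fun i : Fin (n + 1) => (i : ℕ)) = List.range (n + 1) :=
    List.ext_getElem (by simp) (by simp)
  rw [List.ofFn_eq_map, ← List.range_eq_range', ← hfr, List.map_map]
  refine congrArg List.prod (List.map_congr_left fun i _ => ?_)
  simp only [Function.comp_apply, σg, i.isLt, dif_pos]

lemma shift {k : ℕ} (h : k + 2 ≤ n) :
    P n 0 (n + 1) * σg n k = σg n (k + 1) * P n 0 (n + 1) := by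
  have e : P n 0 (n + 1) = P n 0 k * σg n k * σg n (k + 1) * P n (k + 2) (n - 1 - k) := by
    rw [congrArg (P n 0) (show n + 1 = k + (1 + (1 + (n - 1 - k))) by omega),
      P_append, P_append, P_append, P_one, P_one]
    simp only [Nat.zero_add]
    group
  have c1 : σg n k * P n (k + 2) (n - 1 - k) = P n (k + 2) (n - 1 - k) * σg n k :=
    (comm_P_right n (le_refl (k + 2))).eq
  have c2 : σg n (k + 1) * P n 0 k = P n 0 k * σg n (k + 1) :=
    (comm_P_left n (show 0 + k < k + 1 by omega)).eq
  have hbr := braidB n (rfl : k + 1 = k + 1) (show k + 1 < n by omega)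
  calc P n 0 (n + 1) * σg n k
      = P n 0 k * (σg n k * σg n (k + 1)) * (P n (k + 2) (n - 1 - k) * σg n k) := by
        rw [e]; group
    _ = P n 0 k * (σg n k * σg n (k + 1)) * (σg n k * P n (k + 2) (n - 1 - k)) := by
        rw [← c1]
    _ = P n 0 k * (σg n k * σg n (k + 1) * σg n k) * P n (k + 2) (n - 1 - k) := by group
    _ = P n 0 k * (σg n (k + 1) * σg n k * σg n (k + 1)) * P n (k + 2) (n - 1 - k) := by
        rw [hbr]
    _ = (P n 0 k * σg n (k + 1)) * (σg n k * σg n (k + 1) * P n (k + 2) (n - 1 - k)) := by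
        group
    _ = (σg n (k + 1) * P n 0 k) * (σg n k * σg n (k + 1) * P n (k + 2) (n - 1 - k)) := by
        rw [c2]
    _ = σg n (k + 1) * (P n 0 k * σg n k * σg n (k + 1) * P n (k + 2) (n - 1 - k)) := by
        group
    _ = σg n (k + 1) * P n 0 (n + 1) := by rw [← e]

end Stmt6Aux

namespace Stmt6Aux
variable (n : ℕ)

lemma deltaSq : ∀ d a, a + d + 1 = n →
    P n a (n - a) * P n a (n - a) * σg n (n - 1) = σg n a * (P n a (n - a) * P n a (n - a)) := by
  intro d
  induction d with
  | zero =>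
    intro a ha
    have h1 : n - a = 1 := by omega
    have h2 : a = n - 1 := by omega
    subst h2
    rw [h1, P_one, mul_assoc]
  | succ d ih =>
    intro a ha
    have IH := ih (a + 1) (by omega)
    set x := σg n a with hx
    set y := σg n (a + 1) with hy
    set c := σg n (n - 1) with hc
    set D1 := P n (a + 1) (n - (a + 1)) with hD1def
    have hD : P n a (n - a) = x * D1 := by
      rw [congrArg (P n a) (show n - a = (n - (a + 1)) + 1 by omega), P_succ_left]
    have hQ : D1 = y * P n (a + 2) (n - (a + 2)) := by
      rw [hD1def, congrArg (P n (a + 1)) (show n - (a + 1) = (n - (a + 2)) + 1 by omega),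
        P_succ_left]
    have hxQ : P n (a + 2) (n - (a + 2)) * x = x * P n (a + 2) (n - (a + 2)) :=
      (comm_P_right n (le_refl (a + 2))).eq.symm
    have hbr : x * y * x = y * x * y := braidB n rfl (by omega)
    have hDx : D1 * x = y * x * y⁻¹ * D1 := by
      calc D1 * x = y * (P n (a + 2) (n - (a + 2)) * x) := by rw [hQ]; group
        _ = y * (x * P n (a + 2) (n - (a + 2))) := by rw [hxQ]
        _ = y * x * y⁻¹ * (y * P n (a + 2) (n - (a + 2))) := by group
        _ = y * x * y⁻¹ * D1 := by rw [← hQ]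
    have hxx : x * x * y * x * y⁻¹ = x * y * x := by
      calc x * x * y * x * y⁻¹ = x * (x * y * x) * y⁻¹ := by group
        _ = x * (y * x * y) * y⁻¹ := by rw [hbr]
        _ = x * y * x := by group
    rw [hD]
    calc x * D1 * (x * D1) * c = x * (D1 * x) * D1 * c := by group
      _ = x * (y * x * y⁻¹ * D1) * D1 * c := by rw [hDx]
      _ = x * y * x * y⁻¹ * (D1 * D1 * c) := by group
      _ = x * y * x * y⁻¹ * (y * (D1 * D1)) := by rw [IH]
      _ = (x * y * x) * (D1 * D1) := by group
      _ = (x * x * y * x * y⁻¹) * (D1 * D1) := by rw [hxx]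
      _ = x * (x * (y * x * y⁻¹ * D1) * D1) := by group
      _ = x * (x * (D1 * x) * D1) := by rw [hDx]
      _ = x * (x * D1 * (x * D1)) := by group

lemma key (hn : 2 ≤ n) :
    P n 0 (n + 1) * P n 0 (n + 1) * σg n (n - 1)
      = σg n 0 * (P n 0 (n + 1) * P n 0 (n + 1)) := by
  set ρ := P n 0 (n + 1) with hρdef
  set δ := P n 0 n with hδdef
  set b := σg n n with hb
  set c := σg n (n - 1) with hc
  have hρ : ρ = δ * b := by
    rw [hρdef, P_succ_right, Nat.zero_add]
  have hδ : δ = P n 0 (n - 1) * c := by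
    rw [hδdef, congrArg (P n 0) (show n = (n - 1) + 1 by omega), P_succ_right, Nat.zero_add]
  have hbP : b * P n 0 (n - 1) = P n 0 (n - 1) * b :=
    (comm_P_left n (show 0 + (n - 1) < n by omega)).eq
  have hbδ : b * δ = δ * c⁻¹ * (b * c) := by
    calc b * δ = b * P n 0 (n - 1) * c := by rw [hδ]; group
      _ = P n 0 (n - 1) * b * c := by rw [hbP]
      _ = (P n 0 (n - 1) * c) * c⁻¹ * (b * c) := by group
      _ = δ * c⁻¹ * (b * c) := by rw [← hδ]
  have h4 : c * b * c * b = b * c * b * c := rel4B n (by omega)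
  have hδc : δ * δ * c = σg n 0 * (δ * δ) := by
    have := deltaSq n (n - 1) 0 (by omega)
    simpa [Nat.sub_zero] using this
  calc ρ * ρ * c = δ * (b * δ) * b * c := by rw [hρ]; group
    _ = δ * (δ * c⁻¹ * (b * c)) * b * c := by rw [hbδ]
    _ = δ * δ * c⁻¹ * (b * c * b * c) := by group
    _ = δ * δ * c⁻¹ * (c * b * c * b) := by rw [← h4]
    _ = (δ * δ * c) * (c⁻¹ * b * c * b) := by group
    _ = (σg n 0 * (δ * δ)) * (c⁻¹ * b * c * b) := by rw [hδc]
    _ = σg n 0 * (δ * (δ * c⁻¹ * (b * c)) * b) := by group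
    _ = σg n 0 * (δ * (b * δ) * b) := by rw [← hbδ]
    _ = σg n 0 * (ρ * ρ) := by rw [hρ]; group

end Stmt6Aux

namespace Stmt6Aux
variable (n : ℕ)

lemma shift_conj {k : ℕ} (h : k + 2 ≤ n) :
    P n 0 (n + 1) * σg n k * (P n 0 (n + 1))⁻¹ = σg n (k + 1) := by
  rw [shift n h]; group

lemma keyConj (hn : 2 ≤ n) :
    P n 0 (n + 1) * (P n 0 (n + 1) * σg n (n - 1) * (P n 0 (n + 1))⁻¹) * (P n 0 (n + 1))⁻¹
      = σg n 0 := by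
  calc P n 0 (n + 1) * (P n 0 (n + 1) * σg n (n - 1) * (P n 0 (n + 1))⁻¹) * (P n 0 (n + 1))⁻¹
      = (P n 0 (n + 1) * P n 0 (n + 1) * σg n (n - 1)) * ((P n 0 (n + 1))⁻¹ * (P n 0 (n + 1))⁻¹) := by
        group
    _ = (σg n 0 * (P n 0 (n + 1) * P n 0 (n + 1))) * ((P n 0 (n + 1))⁻¹ * (P n 0 (n + 1))⁻¹) := by
        rw [key n hn]
    _ = σg n 0 := by group

lemma σ_top_conj (hn : 2 ≤ n) :
    P n 0 (n + 1) * σg n (n - 2) * (P n 0 (n + 1))⁻¹ = σg n (n - 1) := by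
  rw [shift_conj n (show (n - 2) + 2 ≤ n by omega), show n - 2 + 1 = n - 1 by omega]

lemma B1 (hn : 2 ≤ n) :
    σg n (n - 1) * (P n 0 (n + 1) * σg n (n - 1) * (P n 0 (n + 1))⁻¹) * σg n (n - 1)
      = (P n 0 (n + 1) * σg n (n - 1) * (P n 0 (n + 1))⁻¹) * σg n (n - 1) *
        (P n 0 (n + 1) * σg n (n - 1) * (P n 0 (n + 1))⁻¹) := by
  have h := braid_conj (P n 0 (n + 1)) (σg n (n - 2)) (σg n (n - 1))
    (braidB n (show (n - 2) + 1 = n - 1 by omega) (by omega))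
  rwa [σ_top_conj n hn] at h

lemma B0 (hn : 2 ≤ n) :
    (P n 0 (n + 1) * σg n (n - 1) * (P n 0 (n + 1))⁻¹) * σg n 0 *
        (P n 0 (n + 1) * σg n (n - 1) * (P n 0 (n + 1))⁻¹)
      = σg n 0 * (P n 0 (n + 1) * σg n (n - 1) * (P n 0 (n + 1))⁻¹) * σg n 0 := by
  have h := braid_conj (P n 0 (n + 1)) (σg n (n - 1))
    (P n 0 (n + 1) * σg n (n - 1) * (P n 0 (n + 1))⁻¹) (B1 n hn)
  rwa [keyConj n hn] at h

lemma comm0 (hn : 2 ≤ n) {j : ℕ} (h2 : 2 ≤ j) (hj : j ≤ n - 1) :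
    (P n 0 (n + 1) * σg n (n - 1) * (P n 0 (n + 1))⁻¹) * σg n (j - 1)
      = σg n (j - 1) * (P n 0 (n + 1) * σg n (n - 1) * (P n 0 (n + 1))⁻¹) := by
  have hσ : P n 0 (n + 1) * σg n (j - 2) * (P n 0 (n + 1))⁻¹ = σg n (j - 1) := by
    rw [shift_conj n (show (j - 2) + 2 ≤ n by omega), show j - 2 + 1 = j - 1 by omega]
  have h := comm_conj (P n 0 (n + 1)) (σg n (n - 1)) (σg n (j - 2))
    (commB n (show (j - 2) + 2 ≤ n - 1 by omega)).symm
  rwa [hσ] at h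

lemma rcyc_zero {i : Fin (n + 1)} (hn : 1 ≤ n) (h : (i : ℕ) = 0) :
    rcyc n i = P n 0 (n + 1) * σg n (n - 1) * (P n 0 (n + 1))⁻¹ := by
  rw [rcyc, dif_pos h, ρB_eq, σg_eq n (n - 1) (by omega)]

lemma rcyc_pos {i : Fin (n + 1)} (h : (i : ℕ) ≠ 0) :
    rcyc n i = σg n ((i : ℕ) - 1) := by
  rw [rcyc, dif_neg h, σg_eq n ((i : ℕ) - 1) (by omega)]

lemma val_add_one (hn : 2 ≤ n) (a : Fin (n + 1)) :
    ((a + 1 : Fin (n + 1)) : ℕ) = ((a : ℕ) + 1) % (n + 1) := by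
  rw [Fin.val_add, Fin.val_one', Nat.mod_eq_of_lt (show 1 < n + 1 by omega)]

lemma braid_cyc (hn : 2 ≤ n) (i : Fin (n + 1)) :
    rcyc n i * rcyc n (i + 1) * rcyc n i = rcyc n (i + 1) * rcyc n i * rcyc n (i + 1) := by
  have hi := i.isLt
  by_cases hi0 : (i : ℕ) = 0
  · have h1 : ((i + 1 : Fin (n + 1)) : ℕ) = 1 := by
      rw [val_add_one n hn, hi0]; exact Nat.mod_eq_of_lt (by omega)
    rw [rcyc_zero n (by omega) hi0, rcyc_pos n (show ((i + 1 : Fin (n + 1)) : ℕ) ≠ 0 by omega),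
      h1]
    exact B0 n hn
  · by_cases hin : (i : ℕ) = n
    · have h1 : ((i + 1 : Fin (n + 1)) : ℕ) = 0 := by
        rw [val_add_one n hn, hin, Nat.mod_self]
      rw [rcyc_pos n hi0, rcyc_zero n (by omega) h1, hin]
      exact B1 n hn
    · have h1 : ((i + 1 : Fin (n + 1)) : ℕ) = (i : ℕ) + 1 := by
        rw [val_add_one n hn]; exact Nat.mod_eq_of_lt (by omega)
      rw [rcyc_pos n hi0, rcyc_pos n (show ((i + 1 : Fin (n + 1)) : ℕ) ≠ 0 by omega), h1]
      exact braidB n (by omega) (by omega)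

lemma comm_cyc (hn : 2 ≤ n) (i j : Fin (n + 1)) (h1 : j ≠ i + 1) (h2 : i ≠ j + 1)
    (h3 : i ≠ j) : rcyc n i * rcyc n j = rcyc n j * rcyc n i := by
  have hi := i.isLt
  have hj := j.isLt
  have hv3 : (i : ℕ) ≠ (j : ℕ) := fun h => h3 (Fin.ext h)
  have hv1 : (j : ℕ) ≠ ((i : ℕ) + 1) % (n + 1) := fun h =>
    h1 (Fin.ext (by rw [val_add_one n hn]; exact h))
  have hv2 : (i : ℕ) ≠ ((j : ℕ) + 1) % (n + 1) := fun h =>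
    h2 (Fin.ext (by rw [val_add_one n hn]; exact h))
  by_cases hi0 : (i : ℕ) = 0
  · have hj1 : (j : ℕ) ≠ 1 := by
      intro hh
      exact hv1 (by rw [hh, hi0, Nat.mod_eq_of_lt (by omega)])
    have hjn : (j : ℕ) ≠ n := by
      intro hh
      exact hv2 (by rw [hi0, hh, Nat.mod_self])
    rw [rcyc_zero n (by omega) hi0, rcyc_pos n (show (j : ℕ) ≠ 0 by omega)]
    exact comm0 n hn (by omega) (by omega)
  · by_cases hj0 : (j : ℕ) = 0
    · have hi1 : (i : ℕ) ≠ 1 := by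
        intro hh
        exact hv2 (by rw [hh, hj0, Nat.mod_eq_of_lt (by omega)])
      have hin : (i : ℕ) ≠ n := by
        intro hh
        exact hv1 (by rw [hj0, hh, Nat.mod_self])
      rw [rcyc_zero n (by omega) hj0, rcyc_pos n hi0]
      exact (comm0 n hn (j := (i : ℕ)) (by omega) (by omega)).symm
    · have hij : (i : ℕ) + 2 ≤ (j : ℕ) ∨ (j : ℕ) + 2 ≤ (i : ℕ) := by
        by_cases hin : (i : ℕ) = n
        · have : (i : ℕ) ≠ (j : ℕ) + 1 := fun hh =>
            hv2 (hh.trans (Nat.mod_eq_of_lt (by omega)).symm)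
          omega
        · by_cases hjn : (j : ℕ) = n
          · have : (j : ℕ) ≠ (i : ℕ) + 1 := fun hh =>
              hv1 (hh.trans (Nat.mod_eq_of_lt (by omega)).symm)
            omega
          · have e1 : (j : ℕ) ≠ (i : ℕ) + 1 := fun hh =>
              hv1 (hh.trans (Nat.mod_eq_of_lt (by omega)).symm)
            have e2 : (i : ℕ) ≠ (j : ℕ) + 1 := fun hh =>
              hv2 (hh.trans (Nat.mod_eq_of_lt (by omega)).symm)
            omega
      rw [rcyc_pos n hi0, rcyc_pos n hj0]
      rcases hij with hc | hc
      · exact commB n (by omega)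
      · exact (commB n (by omega)).symm

end Stmt6Aux

/-- There is a well-defined homomorphism `φ₀ : A[Ã_n] → A[B_{n+1}]` sending `t_i ↦ r_i`
for `1 ≤ i ≤ n` and `t_0 ↦ ρ r_n ρ⁻¹` (these images are exactly `rcyc`). -/
theorem stmt6 (n : ℕ) (hn : 2 ≤ n) :
    ∃ φ₀ : ArtinA n →* ArtinB n, ∀ i : Fin (n + 1), φ₀ (tA n i) = rcyc n i := by
  have hrels : ∀ r ∈ ARels n, FreeGroup.lift (rcyc n) r = 1 := by
    intro r hr
    rcases hr with ⟨i, rfl⟩ | ⟨i, j, h1, h2, h3, rfl⟩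
    · simp only [map_mul, map_inv, FreeGroup.lift_apply_of, mul_inv_eq_one]
      exact Stmt6Aux.braid_cyc n hn i
    · simp only [map_mul, map_inv, FreeGroup.lift_apply_of, mul_inv_eq_one]
      exact Stmt6Aux.comm_cyc n hn i j h1 h2 h3
  exact ⟨PresentedGroup.toGroup hrels, fun i => PresentedGroup.toGroup.of hrels⟩
end

section
/- Let Q = h ⟨Y⟩ h^{-1} be a parabolic subgroup of A[B_{n+1}] with Q ⊆ ker ξ = φ₀(A[Ã_n]). Then P := φ₀^{-1}(Q) is a parabolic subgroup of A[Ã_n]. Explicitly, writing h = h_1 ρ^m with h_1 ∈ ker ξ and m = ξ(h), and noting Y ⊆ {r_1,...,r_n}, one has P = φ₀^{-1}(h_1) · ⟨f^m(φ₀^{-1}(Y))⟩ · φ₀^{-1}(h_1)^{-1}. -/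
/-- A parabolic subgroup of `A[Ã_n]`: a conjugate of a subgroup generated by a subset of
the standard generators `t_0, …, t_n`. -/
def IsParabolicA (n : ℕ) (P : Subgroup (ArtinA n)) : Prop :=
  ∃ (g : ArtinA n) (X : Set (Fin (n + 1))),
    P = Subgroup.map (MulAut.conj g).toMonoidHom (Subgroup.closure (tA n '' X))

/-- A parabolic subgroup of `A[B_{n+1}]`: a conjugate of a subgroup generated by a subset
of the standard generators `r_1, …, r_{n+1}`. -/
def IsParabolicB (n : ℕ) (P : Subgroup (ArtinB n)) : Prop :=
  ∃ (h : ArtinB n) (Y : Set (Fin (n + 1))),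
    P = Subgroup.map (MulAut.conj h).toMonoidHom (Subgroup.closure (rB n '' Y))

namespace Aux

lemma relB {n : ℕ} {x : FreeGroup (Fin (n+1))} (hx : x ∈ BRels n) :
    (PresentedGroup.mk (BRels n) x : ArtinB n) = 1 :=
  (QuotientGroup.eq_one_iff _).2 (Subgroup.subset_normalClosure hx)

lemma braidB {n : ℕ} (i j : Fin (n+1)) (hij : (i:ℕ)+1 = j) (hj : (j:ℕ) < n) :
    rB n i * rB n j * rB n i = rB n j * rB n i * rB n j := by
  have h := relB (n := n) (x := .of i * .of j * .of i * (.of j * .of i * .of j)⁻¹)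
    (Or.inl (Or.inl ⟨i, j, hij, hj, rfl⟩))
  simp only [map_mul, map_inv] at h
  rw [mul_inv_eq_one] at h
  exact h

lemma braid4B {n : ℕ} (hn : 1 ≤ n) :
    rB n ⟨n-1, by omega⟩ * rB n ⟨n, by omega⟩ * rB n ⟨n-1, by omega⟩ * rB n ⟨n, by omega⟩ =
    rB n ⟨n, by omega⟩ * rB n ⟨n-1, by omega⟩ * rB n ⟨n, by omega⟩ * rB n ⟨n-1, by omega⟩ := by
  have h := relB (n := n) (Or.inl (Or.inr ⟨hn, rfl⟩))
  simp only [map_mul, map_inv] at h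
  rw [mul_inv_eq_one] at h
  exact h

lemma commB {n : ℕ} (i j : Fin (n+1)) (hij : (i:ℕ)+2 ≤ j) :
    rB n i * rB n j = rB n j * rB n i := by
  have h := relB (n := n) (x := .of i * .of j * (.of j * .of i)⁻¹)
    (Or.inr ⟨i, j, hij, rfl⟩)
  simp only [map_mul, map_inv] at h
  rw [mul_inv_eq_one] at h
  exact h

/-- `b k = r_{k+1}` for `k ≤ n`, junk `1` otherwise. -/
def bB (n k : ℕ) : ArtinB n := if h : k ≤ n then rB n ⟨k, by omega⟩ else 1

lemma bB_eq {n k : ℕ} (h : k ≤ n) : bB n k = rB n ⟨k, by omega⟩ := dif_pos h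

lemma bbraid {n k : ℕ} (h : k + 1 < n) :
    bB n k * bB n (k+1) * bB n k = bB n (k+1) * bB n k * bB n (k+1) := by
  rw [bB_eq (by omega), bB_eq (by omega)]
  exact braidB _ _ rfl h

lemma bcomm {n k m : ℕ} (h : k + 2 ≤ m) (hm : m ≤ n) : Commute (bB n k) (bB n m) := by
  rw [bB_eq (by omega), bB_eq hm]
  exact commB _ _ h

lemma b4 {n : ℕ} (hn : 1 ≤ n) :
    bB n (n-1) * bB n n * bB n (n-1) * bB n n = bB n n * bB n (n-1) * bB n n * bB n (n-1) := by
  rw [bB_eq (by omega), bB_eq le_rfl]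
  exact braid4B hn

/-- product `b k * b (k+1) * ⋯ * b (m-1)`. -/
def SB (n k m : ℕ) : ArtinB n := ((List.range' k (m - k)).map (bB n)).prod

lemma SB_self (n k : ℕ) : SB n k k = 1 := by simp [SB]

lemma SB_le {n k m : ℕ} (h : m ≤ k) : SB n k m = 1 := by
  simp [SB, Nat.sub_eq_zero_of_le h]

lemma SB_succ {n k m : ℕ} (h : k ≤ m) : SB n k (m+1) = SB n k m * bB n m := by
  have : m + 1 - k = (m - k) + 1 := by omega
  rw [SB, this, List.range'_concat, List.map_append, List.prod_append, SB]
  simp [Nat.add_sub_cancel' h]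

lemma SB_split {n : ℕ} {k m l : ℕ} (h1 : k ≤ m) (h2 : m ≤ l) :
    SB n k l = SB n k m * SB n m l := by
  induction l with
  | zero => interval_cases m <;> interval_cases k <;> simp [SB_self]
  | succ l ih =>
    rcases Nat.lt_or_ge m (l+1) with hm | hm
    · rw [SB_succ (by omega), SB_succ (by omega), ih (by omega), mul_assoc]
    · have : m = l + 1 := by omega
      subst this
      rw [SB_self, mul_one]

lemma commute_SB {n : ℕ} {c : ArtinB n} {k : ℕ} :
    ∀ (m : ℕ), (∀ j, k ≤ j → j < m → Commute c (bB n j)) → Commute c (SB n k m) := by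
  intro m
  induction m with
  | zero => intro _; rw [SB_le (by omega)]; exact Commute.one_right c
  | succ m ih =>
    intro hc
    rcases Nat.lt_or_ge m k with hm | hm
    · rw [SB_le (by omega)]; exact Commute.one_right c
    · rw [SB_succ hm]
      exact (ih (fun j h1 h2 => hc j h1 (by omega))).mul_right (hc m hm (by omega))

lemma ρB_eq (n : ℕ) : ρB n = SB n 0 (n+1) := by
  rw [ρB, SB]
  congr 1
  rw [Nat.sub_zero, ← List.range_eq_range', List.ofFn_eq_map]
  apply List.ext_getElem (by simp)
  intro i h1 h2
  simp only [List.getElem_map, List.getElem_finRange, List.getElem_range]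
  rw [bB_eq (by simp at h2; omega)]
  congr 1

end Aux

namespace Aux2
open Aux

variable {G : Type*} [Group G]

lemma tail2 {a b c d : G} (h : a * b = c * d) : ∀ x : G, a * (b * x) = c * (d * x) := by
  intro x; rw [← mul_assoc, ← mul_assoc, h]

lemma tail3 {a b c d e f : G} (h : a * b * c = d * e * f) :
    ∀ x : G, a * (b * (c * x)) = d * (e * (f * x)) := by
  intro x; rw [← mul_assoc, ← mul_assoc, ← mul_assoc, ← mul_assoc, h]

lemma tail4 {a b c d a' b' c' d' : G} (h : a * b * c * d = a' * b' * c' * d') :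
    ∀ x : G, a * (b * (c * (d * x))) = a' * (b' * (c' * (d' * x))) := by
  intro x
  rw [← mul_assoc, ← mul_assoc, ← mul_assoc, ← mul_assoc, ← mul_assoc, ← mul_assoc, h]

end Aux2

namespace Aux
open Aux2

variable {n : ℕ}

lemma shift' (i : ℕ) (hi : i + 1 < n) :
    ∀ x, SB n 0 (n+1) * (bB n i * x) = bB n (i+1) * (SB n 0 (n+1) * x) := by
  have hsplit : ∀ x, SB n 0 (n+1) * x = SB n 0 (i+2) * (SB n (i+2) (n+1) * x) := by
    intro x; rw [SB_split (show 0 ≤ i+2 by omega) (show i+2 ≤ n+1 by omega), mul_assoc]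
  have hexp : ∀ x, SB n 0 (i+2) * x = SB n 0 i * (bB n i * (bB n (i+1) * x)) := by
    intro x
    rw [SB_succ (by omega), SB_succ (by omega)]
    simp only [mul_assoc]
  have hc1 : Commute (bB n i) (SB n (i+2) (n+1)) :=
    commute_SB _ (fun j hj1 hj2 => bcomm (by omega) (by omega))
  have hTi : ∀ x, SB n (i+2) (n+1) * (bB n i * x) = bB n i * (SB n (i+2) (n+1) * x) :=
    tail2 hc1.symm.eq
  have hc2 : Commute (bB n (i+1)) (SB n 0 i) :=
    commute_SB _ (fun j hj1 hj2 => (bcomm (show j + 2 ≤ i+1 by omega) (by omega)).symm)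
  have hci : ∀ x, SB n 0 i * (bB n (i+1) * x) = bB n (i+1) * (SB n 0 i * x) :=
    tail2 hc2.symm.eq
  have braidt : ∀ x, bB n i * (bB n (i+1) * (bB n i * x)) =
      bB n (i+1) * (bB n i * (bB n (i+1) * x)) := tail3 (bbraid hi)
  intro x
  simp only [hsplit, hTi, hexp, braidt, hci]

lemma deltasq' : ∀ k, k < n →
    ∀ x, SB n 0 (k+1) * (SB n 0 (k+1) * x) = bB n 0 * (SB n 0 (k+1) * (SB n 0 k * x)) := by
  intro k
  induction k with
  | zero =>
    intro _ x
    have h1 : SB n 0 1 = bB n 0 := by rw [SB_succ le_rfl, SB_self, one_mul]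
    rw [h1, SB_self]
    simp [mul_assoc]
  | succ k ih =>
    intro hk x
    have hS1 : ∀ x, SB n 0 (k+1) * x = SB n 0 k * (bB n k * x) := by
      intro x; rw [SB_succ (by omega)]; simp only [mul_assoc]
    have hS2 : ∀ x, SB n 0 (k+2) * x = SB n 0 k * (bB n k * (bB n (k+1) * x)) := by
      intro x; rw [SB_succ (by omega), SB_succ (by omega)]; simp only [mul_assoc]
    have hc : Commute (bB n (k+1)) (SB n 0 k) :=
      commute_SB _ (fun j hj1 hj2 => (bcomm (show j + 2 ≤ k+1 by omega) (by omega)).symm)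
    have hct : ∀ x, bB n (k+1) * (SB n 0 k * x) = SB n 0 k * (bB n (k+1) * x) := tail2 hc.eq
    have braidt : ∀ x, bB n (k+1) * (bB n k * (bB n (k+1) * x)) =
        bB n k * (bB n (k+1) * (bB n k * x)) := tail3 (bbraid hk).symm
    have ihe : ∀ y, SB n 0 k * (bB n k * (SB n 0 k * (bB n k * y))) =
        bB n 0 * (SB n 0 k * (bB n k * (SB n 0 k * y))) := by
      intro y
      have := ih (by omega) y
      simpa only [hS1] using this
    simp only [hS2, hS1, hct, braidt, ihe]

lemma rho_sq' (hn : 1 ≤ n) :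
    ∀ x, SB n 0 (n+1) * (SB n 0 (n+1) * (bB n (n-1) * x)) =
      bB n 0 * (SB n 0 (n+1) * (SB n 0 (n+1) * x)) := by
  obtain ⟨d, rfl⟩ : ∃ d, n = d + 1 := ⟨n - 1, by omega⟩
  simp only [Nat.add_sub_cancel]
  have hexp : ∀ x, SB (d+1) 0 (d+1+1) * x =
      SB (d+1) 0 d * (bB (d+1) d * (bB (d+1) (d+1) * x)) := by
    intro x
    rw [SB_succ (by omega), SB_succ (by omega)]
    simp only [mul_assoc]
  have hq : Commute (bB (d+1) (d+1)) (SB (d+1) 0 d) :=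
    commute_SB _ (fun j hj1 hj2 => (bcomm (show j + 2 ≤ d+1 by omega) (by omega)).symm)
  have hqW : ∀ x, bB (d+1) (d+1) * (SB (d+1) 0 d * x) =
      SB (d+1) 0 d * (bB (d+1) (d+1) * x) := tail2 hq.eq
  have h4t : ∀ x, bB (d+1) (d+1) * (bB (d+1) d * (bB (d+1) (d+1) * (bB (d+1) d * x))) =
      bB (d+1) d * (bB (d+1) (d+1) * (bB (d+1) d * (bB (d+1) (d+1) * x))) := by
    have h4 := b4 (n := d+1) (by omega)
    simp only [Nat.add_sub_cancel] at h4
    exact tail4 h4.symm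
  have hdel := deltasq' (n := d+1) d (by omega)
  have hS1 : ∀ x, SB (d+1) 0 (d+1) * x = SB (d+1) 0 d * (bB (d+1) d * x) := by
    intro x; rw [SB_succ (by omega)]; simp only [mul_assoc]
  have ihe : ∀ y, SB (d+1) 0 d * (bB (d+1) d * (SB (d+1) 0 d * (bB (d+1) d * y))) =
      bB (d+1) 0 * (SB (d+1) 0 d * (bB (d+1) d * (SB (d+1) 0 d * y))) := by
    intro y
    simpa only [hS1] using hdel y
  intro x
  simp only [hexp, hqW, h4t, ihe]

end Aux

namespace Aux

variable {n : ℕ}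

lemma rho_shift (i : ℕ) (hi : i + 1 < n) :
    ρB n * bB n i = bB n (i+1) * ρB n := by
  have := shift' i hi 1
  rw [mul_one, mul_one] at this
  rw [ρB_eq]
  exact this

lemma rho_sq_shift (hn : 1 ≤ n) :
    ρB n * ρB n * bB n (n-1) = bB n 0 * (ρB n * ρB n) := by
  have := rho_sq' hn 1
  rw [mul_one, mul_one] at this
  rw [ρB_eq, mul_assoc]
  exact this

lemma conj_rcyc (hn : 1 ≤ n) (i : Fin (n+1)) :
    ρB n * rcyc n i * (ρB n)⁻¹ = rcyc n (i + 1) := by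
  by_cases h0 : (i : ℕ) = 0
  · have hne : i ≠ Fin.last n := by
      intro he; rw [he] at h0; simp [Fin.last] at h0; omega
    have hi1 : ((i + 1 : Fin (n+1)) : ℕ) = 1 := by
      rw [Fin.val_add_one, if_neg hne, h0]
    have hl : rcyc n i = ρB n * rB n ⟨n-1, by omega⟩ * (ρB n)⁻¹ := by
      rw [rcyc, dif_pos h0]
    have hr : rcyc n (i+1) = rB n ⟨0, by omega⟩ := by
      rw [rcyc, dif_neg (by omega)]
      congr 1
      exact Fin.ext (by simp [hi1])
    rw [hl, hr]
    have key := rho_sq_shift hn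
    rw [bB_eq (show n-1 ≤ n by omega), bB_eq (show 0 ≤ n by omega)] at key
    calc ρB n * (ρB n * rB n ⟨n-1, by omega⟩ * (ρB n)⁻¹) * (ρB n)⁻¹
        = ρB n * ρB n * rB n ⟨n-1, by omega⟩ * (ρB n * ρB n)⁻¹ := by group
      _ = rB n ⟨0, by omega⟩ * (ρB n * ρB n) * (ρB n * ρB n)⁻¹ := by
            rw [key, mul_assoc]
      _ = rB n ⟨0, by omega⟩ := by group
  · have hl : rcyc n i = rB n ⟨(i:ℕ)-1, by omega⟩ := by
      rw [rcyc, dif_neg h0]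
    by_cases hn2 : (i : ℕ) = n
    · have hlast : i = Fin.last n := Fin.ext (by simpa using hn2)
      have hi1 : ((i + 1 : Fin (n+1)) : ℕ) = 0 := by
        rw [Fin.val_add_one, if_pos hlast]
      have hr : rcyc n (i+1) = ρB n * rB n ⟨n-1, by omega⟩ * (ρB n)⁻¹ := by
        rw [rcyc, dif_pos hi1]
      have : (⟨(i:ℕ)-1, by omega⟩ : Fin (n+1)) = ⟨n-1, by omega⟩ :=
        Fin.ext (by simp [hn2])
      rw [hl, hr, this]
    · have hi : (i : ℕ) < n := by omega
      have hne : i ≠ Fin.last n := by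
        intro he; rw [he] at hn2; simp [Fin.last] at hn2
      have hi1 : ((i + 1 : Fin (n+1)) : ℕ) = (i:ℕ) + 1 := by
        rw [Fin.val_add_one, if_neg hne]
      have hr : rcyc n (i+1) = rB n ⟨(i:ℕ), by omega⟩ := by
        rw [rcyc, dif_neg (by omega)]
        congr 1
        exact Fin.ext (by simp [hi1])
      have key := rho_shift (n := n) ((i:ℕ)-1) (by omega)
      rw [show (i:ℕ)-1+1 = (i:ℕ) by omega] at key
      rw [bB_eq (show (i:ℕ)-1 ≤ n by omega), bB_eq (show (i:ℕ) ≤ n by omega)] at key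
      rw [hl, hr, key, mul_inv_cancel_right]

open Fin.CommRing in
lemma conj_rcyc_zpow (hn : 1 ≤ n) : ∀ (m : ℤ) (i : Fin (n+1)),
    ρB n ^ m * rcyc n i * (ρB n ^ m)⁻¹ = rcyc n (i + (m : Fin (n+1))) := by
  have hinv : ∀ i : Fin (n+1), (ρB n)⁻¹ * rcyc n i * ρB n = rcyc n (i - 1) := by
    intro i
    have := conj_rcyc hn (i - 1)
    rw [sub_add_cancel] at this
    rw [← this]
    group
  intro m
  induction m using Int.induction_on with
  | zero => intro i; simp
  | succ k ih =>
    intro i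
    have h1 := conj_rcyc hn i
    calc ρB n ^ ((k:ℤ)+1) * rcyc n i * (ρB n ^ ((k:ℤ)+1))⁻¹
        = ρB n ^ (k:ℤ) * (ρB n * rcyc n i * (ρB n)⁻¹) * (ρB n ^ (k:ℤ))⁻¹ := by
          rw [zpow_add_one]; group
      _ = ρB n ^ (k:ℤ) * rcyc n (i + 1) * (ρB n ^ (k:ℤ))⁻¹ := by rw [h1]
      _ = rcyc n (i + 1 + ((k:ℤ) : Fin (n+1))) := ih (i + 1)
      _ = rcyc n (i + (((k:ℤ)+1 : ℤ) : Fin (n+1))) := by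
          congr 1
          push_cast
          ring
  | pred k ih =>
    intro i
    have h1 := hinv i
    calc ρB n ^ (-(k:ℤ)-1) * rcyc n i * (ρB n ^ (-(k:ℤ)-1))⁻¹
        = ρB n ^ (-(k:ℤ)) * ((ρB n)⁻¹ * rcyc n i * ρB n) * (ρB n ^ (-(k:ℤ)))⁻¹ := by
          rw [sub_eq_add_neg, zpow_add, zpow_neg_one]; group
      _ = ρB n ^ (-(k:ℤ)) * rcyc n (i - 1) * (ρB n ^ (-(k:ℤ)))⁻¹ := by rw [h1]
      _ = rcyc n (i - 1 + ((-(k:ℤ) : ℤ) : Fin (n+1))) := ih (i - 1)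
      _ = rcyc n (i + ((-(k:ℤ)-1 : ℤ) : Fin (n+1))) := by
          congr 1
          push_cast
          ring

end Aux


open Fin.CommRing in
/-- If a parabolic subgroup `Q = h ⟨Y⟩ h⁻¹` of `A[B_{n+1}]` lies in `ker ξ = φ₀(A[Ã_n])`,
then `P = φ₀⁻¹(Q)` is a parabolic subgroup of `A[Ã_n]`; explicitly, `Y ⊆ {r_1,…,r_n}` and,
writing `h = h₁ ρ^m` with `h₁ ∈ ker ξ` and `m = ξ(h)`, one has
`P = φ₀⁻¹(h₁) ⟨f^m(φ₀⁻¹(Y))⟩ φ₀⁻¹(h₁)⁻¹`. -/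
theorem stmt13 (n : ℕ) (hn : 2 ≤ n)
    (ξ : ArtinB n →* Multiplicative ℤ)
    (hξ : ∀ i : Fin (n + 1), ξ (rB n i) = Multiplicative.ofAdd (if (i : ℕ) = n then 1 else 0))
    (φ₀ : ArtinA n →* ArtinB n) (hφ : ∀ i : Fin (n + 1), φ₀ (tA n i) = rcyc n i)
    (hinj : Function.Injective φ₀) (hrange : φ₀.range = ξ.ker)
    (f : MulAut (ArtinA n)) (hf : ∀ i : Fin (n + 1), f (tA n i) = tA n (i + 1))
    (h : ArtinB n) (Y : Set (Fin (n + 1)))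
    (hQ : Subgroup.map (MulAut.conj h).toMonoidHom (Subgroup.closure (rB n '' Y)) ≤ ξ.ker) :
    IsParabolicA n
      ((Subgroup.map (MulAut.conj h).toMonoidHom (Subgroup.closure (rB n '' Y))).comap φ₀) ∧
    (∀ j ∈ Y, (j : ℕ) < n) ∧
    ∃ g₁ : ArtinA n,
      φ₀ g₁ = h * (ρB n) ^ (-(Multiplicative.toAdd (ξ h))) ∧
      (Subgroup.map (MulAut.conj h).toMonoidHom (Subgroup.closure (rB n '' Y))).comap φ₀ =
        Subgroup.map (MulAut.conj g₁).toMonoidHom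
          (Subgroup.closure ((f ^ (Multiplicative.toAdd (ξ h))) ''
            (tA n '' {i : Fin (n + 1) | ∃ j ∈ Y, (i : ℕ) = (j : ℕ) + 1}))) := by
  classical
  set m : ℤ := Multiplicative.toAdd (ξ h) with hm
  have hY : ∀ j ∈ Y, (j : ℕ) < n := by
    intro j hj
    have hmem : h * rB n j * h⁻¹ ∈
        Subgroup.map (MulAut.conj h).toMonoidHom (Subgroup.closure (rB n '' Y)) := by
      refine ⟨rB n j, Subgroup.subset_closure ⟨j, hj, rfl⟩, ?_⟩
      simp [MulAut.conj_apply]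
    have hk : ξ (h * rB n j * h⁻¹) = 1 := hQ hmem
    have h1 : ξ (rB n j) = 1 := by
      rw [map_mul, map_mul, map_inv, mul_comm (ξ h) (ξ (rB n j)), mul_assoc,
        mul_inv_cancel, mul_one] at hk
      exact hk
    rw [hξ j] at h1
    by_contra hc
    have hjn : (j : ℕ) = n := by omega
    rw [if_pos hjn] at h1
    have := congrArg Multiplicative.toAdd h1
    simp at this
  have hξρ : ξ (ρB n) = Multiplicative.ofAdd 1 := by
    rw [ρB, map_list_prod, List.map_ofFn, List.prod_ofFn]
    simp only [Function.comp, hξ]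
    rw [← ofAdd_sum]
    congr 1
    have heq : ∀ i : Fin (n+1), ((i : ℕ) = n) = (i = Fin.last n) := by
      intro i
      rw [eq_iff_iff]
      exact ⟨fun hh => Fin.ext (by simpa using hh), fun hh => by rw [hh]; rfl⟩
    simp only [heq]
    simp [Finset.sum_ite_eq']
  have hker : h * ρB n ^ (-m) ∈ ξ.ker := by
    rw [MonoidHom.mem_ker]
    rw [map_mul, map_zpow, hξρ,
      show ξ h = Multiplicative.ofAdd m from (ofAdd_toAdd _).symm,
      ← ofAdd_zsmul, ← ofAdd_add]
    simp
  obtain ⟨g₁, hg₁⟩ : ∃ g₁, φ₀ g₁ = h * ρB n ^ (-m) := by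
    have : h * ρB n ^ (-m) ∈ φ₀.range := by rw [hrange]; exact hker
    exact this
  have hf_zpow : ∀ (k : ℤ) (i : Fin (n+1)),
      (f ^ k) (tA n i) = tA n (i + (k : Fin (n+1))) := by
    have hfinv : ∀ i, (f⁻¹ : MulAut (ArtinA n)) (tA n i) = tA n (i - 1) := by
      intro i
      have hh := hf (i - 1)
      rw [sub_add_cancel] at hh
      rw [← hh]
      simp
    intro k
    induction k using Int.induction_on with
    | zero => intro i; simp
    | succ k ih =>
      intro i
      rw [zpow_add_one, MulAut.mul_apply, hf, ih]
      congr 1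
      push_cast
      ring
    | pred k ih =>
      intro i
      rw [sub_eq_add_neg, zpow_add, zpow_neg_one, MulAut.mul_apply, hfinv, ih]
      congr 1
      push_cast
      ring
  set X : Set (Fin (n+1)) := {i : Fin (n + 1) | ∃ j ∈ Y, (i : ℕ) = (j : ℕ) + 1} with hX
  have himg : rcyc n '' X = rB n '' Y := by
    ext x
    constructor
    · rintro ⟨i, ⟨j, hj, hij⟩, rfl⟩
      refine ⟨j, hj, ?_⟩
      have hjn := hY j hj
      rw [rcyc, dif_neg (by omega)]
      all_goals exact congrArg (rB n) (Fin.ext (by simp [hij]))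
    · rintro ⟨j, hj, rfl⟩
      have hjn := hY j hj
      refine ⟨⟨(j : ℕ) + 1, by omega⟩, ⟨j, hj, rfl⟩, ?_⟩
      rw [rcyc, dif_neg (by simp)]
      all_goals exact congrArg (rB n) (Fin.ext (by simp))
  have hfimg : (⇑(f ^ m)) '' (tA n '' X)
      = tA n '' ((fun i => i + (m : Fin (n+1))) '' X) := by
    rw [Set.image_image, Set.image_image]
    exact Set.image_congr (fun i _ => hf_zpow m i)
  have hcomp1 : φ₀.comp (MulAut.conj g₁).toMonoidHom
      = (MulAut.conj (φ₀ g₁)).toMonoidHom.comp φ₀ := by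
    ext x
    simp [MulAut.conj_apply]
  have himg2 : φ₀ '' ((⇑(f ^ m)) '' (tA n '' X))
      = (⇑(MulAut.conj (ρB n ^ m)).toMonoidHom) '' (rB n '' Y) := by
    rw [← himg, Set.image_image, Set.image_image, Set.image_image]
    apply Set.image_congr
    intro i _
    rw [hf_zpow m i, hφ]
    have := Aux.conj_rcyc_zpow (n := n) (by omega) m i
    simp only [MulAut.conj_apply, MulEquiv.coe_toMonoidHom]
    rw [← this]
  have hcomp2 : (MulAut.conj (φ₀ g₁)).toMonoidHom.comp (MulAut.conj (ρB n ^ m)).toMonoidHom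
      = (MulAut.conj (φ₀ g₁ * ρB n ^ m)).toMonoidHom := by
    ext x
    simp [MulAut.conj_apply, mul_assoc]
  have hgρ : φ₀ g₁ * ρB n ^ m = h := by
    rw [hg₁, zpow_neg, inv_mul_cancel_right]
  have key : Subgroup.map φ₀ (Subgroup.map (MulAut.conj g₁).toMonoidHom
        (Subgroup.closure ((⇑(f ^ m)) '' (tA n '' X))))
      = Subgroup.map (MulAut.conj h).toMonoidHom (Subgroup.closure (rB n '' Y)) := by
    rw [Subgroup.map_map, hcomp1, ← Subgroup.map_map, MonoidHom.map_closure, himg2,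
      ← MonoidHom.map_closure, Subgroup.map_map, hcomp2, hgρ]
  have main : (Subgroup.map (MulAut.conj h).toMonoidHom
        (Subgroup.closure (rB n '' Y))).comap φ₀
      = Subgroup.map (MulAut.conj g₁).toMonoidHom
        (Subgroup.closure ((⇑(f ^ m)) '' (tA n '' X))) := by
    rw [← key, Subgroup.comap_map_eq_self_of_injective hinj]
  exact ⟨⟨g₁, (fun i => i + (m : Fin (n+1))) '' X, by rw [main, hfimg]⟩, hY, g₁, hg₁, main⟩
end

section
/- Assume that the intersection of any two parabolic subgroups of A[B_{n+1}] is a parabolic subgroup of A[B_{n+1}]. Then the intersection of any two parabolic subgroups of the Euclidean braid group A[Ã_n] is a parabolic subgroup of A[Ã_n]. -/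
open Fin.CommRing

namespace Stmt15Aux

section Chain
variable {G : Type*} [Group G]

/-- product `s a * s (a+1) * ⋯ * s (a+l-1)` -/
def cp (s : ℕ → G) (a l : ℕ) : G := ((List.range' a l).map s).prod

@[simp] lemma cp_zero (s : ℕ → G) (a : ℕ) : cp s a 0 = 1 := rfl

lemma cp_succ (s : ℕ → G) (a l : ℕ) : cp s a (l + 1) = s a * cp s (a + 1) l := by
  simp [cp, List.range'_succ]

lemma cp_one (s : ℕ → G) (a : ℕ) : cp s a 1 = s a := by
  simp [cp_succ]

lemma cp_succ' (s : ℕ → G) (a l : ℕ) : cp s a (l + 1) = cp s a l * s (a + l) := by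
  induction l generalizing a with
  | zero => simp [cp_one]
  | succ l ih =>
    rw [cp_succ s a (l + 1), ih (a + 1), cp_succ s a l, mul_assoc,
      show a + (l + 1) = a + 1 + l from by omega]

lemma cp_append (s : ℕ → G) (a l₁ l₂ : ℕ) :
    cp s a (l₁ + l₂) = cp s a l₁ * cp s (a + l₁) l₂ := by
  induction l₂ with
  | zero => simp
  | succ l₂ ih =>
    rw [show l₁ + (l₂ + 1) = (l₁ + l₂) + 1 from rfl, cp_succ', ih, cp_succ', mul_assoc,
      ← Nat.add_assoc]

lemma cp_congr {s s' : ℕ → G} {a l : ℕ} (h : ∀ j, a ≤ j → j < a + l → s j = s' j) :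
    cp s a l = cp s' a l := by
  induction l with
  | zero => simp
  | succ l ih =>
    rw [cp_succ', cp_succ', ih (fun j hj hj2 => h j hj (by omega)), h (a + l) (by omega) (by omega)]

lemma cp_shift (s : ℕ → G) (a l : ℕ) : cp (fun j => s (j + 1)) a l = cp s (a + 1) l := by
  induction l with
  | zero => simp
  | succ l ih =>
    rw [cp_succ', cp_succ', ih, Nat.add_right_comm a l 1]

lemma cp_map {H : Type*} [Group H] (f : G →* H) (s : ℕ → G) (a l : ℕ) :
    f (cp s a l) = cp (fun j => f (s j)) a l := by
  induction l with
  | zero => simp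
  | succ l ih => rw [cp_succ', cp_succ', map_mul, ih]

/-- if `x` commutes with every letter of the chain, it commutes with the product. -/
lemma cp_comm {s : ℕ → G} {x : G} {a l : ℕ}
    (h : ∀ j, a ≤ j → j < a + l → x * s j = s j * x) :
    x * cp s a l = cp s a l * x := by
  induction l with
  | zero => simp
  | succ l ih =>
    rw [cp_succ', ← mul_assoc, ih (fun j hj hj2 => h j hj (by omega)), mul_assoc,
      h (a + l) (by omega) (by omega), mul_assoc]

lemma abstract_sq (A C u v e : G) (f3 : v * A = A * v) (f4 : u * v * u = v * u * v)
    (f5 : A * u * A = C * (A * u)) (f6 : A * u = e * C) :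
    A * u * v * (A * u * v) * v = e * (A * u * v * (A * u * v)) := by
  have key : e * (A * u * A) = A * u * (A * u) := by rw [f5, ← mul_assoc, ← f6]
  have hL : A * u * v * (A * u * v) * v = A * u * (A * u) * (v * u * v) := by
    calc A * u * v * (A * u * v) * v = A * u * (v * A * (u * (v * v))) := by group
      _ = A * u * (A * v * (u * (v * v))) := by rw [f3]
      _ = A * u * A * (v * u * v) * v := by group
      _ = A * u * A * (u * v * u) * v := by rw [← f4]
      _ = A * u * (A * u) * (v * u * v) := by group
  have hR : e * (A * u * v * (A * u * v)) = A * u * (A * u) * (v * u * v) := by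
    calc e * (A * u * v * (A * u * v)) = e * (A * u * (v * A * (u * v))) := by group
      _ = e * (A * u * (A * v * (u * v))) := by rw [f3]
      _ = e * (A * u * A) * (v * u * v) := by group
      _ = A * u * (A * u) * (v * u * v) := by rw [key]
  rw [hL, hR]

section ChainRel

variable {s : ℕ → G} {a l : ℕ}
variable (hb : ∀ i, a ≤ i → i + 2 ≤ a + l →
    s i * s (i + 1) * s i = s (i + 1) * s i * s (i + 1))
variable (hc : ∀ i j, a ≤ i → i + 2 ≤ j → j < a + l → s i * s j = s j * s i)

include hb hc in
/-- `D s_i D⁻¹ = s_{i+1}` for the full chain product `D`. -/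
lemma cp_conj {i : ℕ} (hi : a ≤ i) (hi2 : i + 2 ≤ a + l) :
    cp s a l * s i = s (i + 1) * cp s a l := by
  obtain ⟨d, rfl⟩ : ∃ d, i = a + d := ⟨i - a, by omega⟩
  obtain ⟨m, rfl⟩ : ∃ m, l = d + 2 + m := ⟨l - d - 2, by omega⟩
  have hsplit : cp s a (d + 2 + m) =
      cp s a d * (s (a + d) * s (a + d + 1)) * cp s (a + d + 2) m := by
    rw [cp_append s a (d + 2) m, cp_append s a d 2]
    have : cp s (a + d) 2 = s (a + d) * s (a + d + 1) := by
      rw [cp_succ' s (a + d) 1, cp_one]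
    rw [this, ← Nat.add_assoc a d 2]
  have c1 : SemiconjBy (cp s (a + d + 2) m) (s (a + d)) (s (a + d)) := by
    unfold SemiconjBy
    exact (cp_comm (fun j hj hj2 => hc (a + d) j (by omega) (by omega) (by omega))).symm
  have c2 : SemiconjBy (s (a + d) * s (a + d + 1)) (s (a + d)) (s (a + d + 1)) := by
    unfold SemiconjBy
    rw [← mul_assoc]
    exact hb (a + d) (by omega) (by omega)
  have c3 : SemiconjBy (cp s a d) (s (a + d + 1)) (s (a + d + 1)) := by
    unfold SemiconjBy
    exact (cp_comm (fun j hj hj2 => (hc j (a + d + 1) hj (by omega) (by omega)).symm)).symm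
  have htot := (c3.mul_left c2).mul_left (b := cp s (a + d + 2) m) c1
  unfold SemiconjBy at htot
  rw [hsplit]
  exact htot

include hb hc in
/-- `D (s_a ⋯ s_{a+l'-1}) D⁻¹ = s_{a+1} ⋯ s_{a+l'}`. -/
lemma cp_mul_cp {l' : ℕ} (hl' : l' < l) :
    cp s a l * cp s a l' = cp s (a + 1) l' * cp s a l := by
  induction l' with
  | zero => simp
  | succ m ih =>
    rw [cp_succ', ← mul_assoc, ih (by omega), mul_assoc,
      cp_conj hb hc (by omega) (by omega), cp_succ' s (a + 1) m, Nat.add_right_comm a 1 m,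
      ← mul_assoc]

include hb hc in
/-- `D² s_{a+l-1} D⁻² = s_a`. -/
lemma cp_sq (hl : 1 ≤ l) :
    cp s a l * cp s a l * s (a + l - 1) = s a * (cp s a l * cp s a l) := by
  obtain ⟨m, rfl⟩ : ∃ m, l = m + 1 := ⟨l - 1, by omega⟩
  rw [show a + (m + 1) - 1 = a + m from by omega]
  rcases Nat.eq_zero_or_pos m with hm | hm
  · subst hm
    simp only [Nat.zero_add, Nat.add_zero, cp_one]
    rw [mul_assoc]
  · obtain ⟨k, rfl⟩ : ∃ k, m = k + 1 := ⟨m - 1, by omega⟩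
    have f3 : s (a + (k + 1)) * cp s a k = cp s a k * s (a + (k + 1)) := by
      exact cp_comm (fun j (hj : a ≤ j) (hj2 : j < a + k) =>
        (hc j (a + (k + 1)) hj (by omega) (by omega)).symm)
    have f4 : s (a + k) * s (a + (k + 1)) * s (a + k) =
        s (a + (k + 1)) * s (a + k) * s (a + (k + 1)) := by
      have := hb (a + k) (by omega) (by omega)
      rwa [show a + k + 1 = a + (k + 1) from by omega] at this
    have f5 : cp s a (k + 1) * cp s a k = cp s (a + 1) k * cp s a (k + 1) :=
      cp_mul_cp (fun i h1 h2 => hb i h1 (by omega))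
        (fun i j h1 h2 h3 => hc i j h1 h2 (by omega)) (by omega)
    have f6 : cp s a (k + 1) = s a * cp s (a + 1) k := cp_succ s a k
    rw [cp_succ' s a k] at f5 f6
    rw [cp_succ' s a (k + 1), cp_succ' s a k]
    exact abstract_sq _ _ _ _ _ f3 f4 f5 f6

end ChainRel
end Chain
end Stmt15Aux

namespace Stmt15Aux

section ArtinFacts
variable {n : ℕ}

lemma mem_rel_eq {α : Type*} {rels : Set (FreeGroup α)} {u v : FreeGroup α}
    (h : u * v⁻¹ ∈ rels) : PresentedGroup.mk rels u = PresentedGroup.mk rels v := by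
  have h1 : (PresentedGroup.mk rels) (u * v⁻¹) = 1 :=
    (QuotientGroup.eq_one_iff _).2 (Subgroup.subset_normalClosure h)
  rw [map_mul, map_inv, mul_inv_eq_one] at h1
  exact h1

lemma braidB {i j : Fin (n + 1)} (h1 : (i : ℕ) + 1 = j) (h2 : (j : ℕ) < n) :
    rB n i * rB n j * rB n i = rB n j * rB n i * rB n j := by
  have hm : (FreeGroup.of i * FreeGroup.of j * FreeGroup.of i *
      (FreeGroup.of j * FreeGroup.of i * FreeGroup.of j)⁻¹ : FreeGroup (Fin (n+1))) ∈ BRels n :=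
    Or.inl (Or.inl ⟨i, j, h1, h2, rfl⟩)
  have := mem_rel_eq hm
  simp only [map_mul] at this
  exact this

lemma fourB (hn : 1 ≤ n) :
    rB n ⟨n - 1, by omega⟩ * rB n ⟨n, by omega⟩ * rB n ⟨n - 1, by omega⟩ * rB n ⟨n, by omega⟩ =
    rB n ⟨n, by omega⟩ * rB n ⟨n - 1, by omega⟩ * rB n ⟨n, by omega⟩ * rB n ⟨n - 1, by omega⟩ := by
  have hm : (FreeGroup.of (⟨n - 1, by omega⟩ : Fin (n + 1)) * FreeGroup.of ⟨n, by omega⟩ *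
      FreeGroup.of ⟨n - 1, by omega⟩ * FreeGroup.of ⟨n, by omega⟩ *
      (FreeGroup.of (⟨n, by omega⟩ : Fin (n + 1)) * FreeGroup.of ⟨n - 1, by omega⟩ *
        FreeGroup.of ⟨n, by omega⟩ * FreeGroup.of ⟨n - 1, by omega⟩)⁻¹) ∈ BRels n :=
    Or.inl (Or.inr ⟨hn, rfl⟩)
  have := mem_rel_eq hm
  simp only [map_mul] at this
  exact this

lemma commB {i j : Fin (n + 1)} (h : (i : ℕ) + 2 ≤ j) :
    rB n i * rB n j = rB n j * rB n i := by
  have hm : (FreeGroup.of i * FreeGroup.of j *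
      (FreeGroup.of j * FreeGroup.of i)⁻¹ : FreeGroup (Fin (n+1))) ∈ BRels n :=
    Or.inr ⟨i, j, h, rfl⟩
  have := mem_rel_eq hm
  simp only [map_mul] at this
  exact this

lemma braidA (i : Fin (n + 1)) :
    tA n i * tA n (i + 1) * tA n i = tA n (i + 1) * tA n i * tA n (i + 1) := by
  have hm : (FreeGroup.of i * FreeGroup.of (i + 1) * FreeGroup.of i *
      (FreeGroup.of (i + 1) * FreeGroup.of i * FreeGroup.of (i + 1))⁻¹ :
        FreeGroup (Fin (n+1))) ∈ ARels n :=
    Or.inl ⟨i, rfl⟩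
  have := mem_rel_eq hm
  simp only [map_mul] at this
  exact this

lemma commA {i j : Fin (n + 1)} (h1 : j ≠ i + 1) (h2 : i ≠ j + 1) (h3 : i ≠ j) :
    tA n i * tA n j = tA n j * tA n i := by
  have hm : (FreeGroup.of i * FreeGroup.of j *
      (FreeGroup.of j * FreeGroup.of i)⁻¹ : FreeGroup (Fin (n+1))) ∈ ARels n :=
    Or.inr ⟨i, j, h1, h2, h3, rfl⟩
  have := mem_rel_eq hm
  simp only [map_mul] at this
  exact this

/-- `sB i = r_{i+1}` (paper numbering), as a function on `ℕ`. -/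
def sB (n : ℕ) : ℕ → ArtinB n := fun i => rB n ⟨min i n, by omega⟩

lemma sB_eq {i : ℕ} (h : i ≤ n) : sB n i = rB n ⟨i, by omega⟩ := by
  unfold sB
  congr 1
  exact Fin.ext (by simp [Nat.min_eq_left h])

lemma hbB : ∀ i, 0 ≤ i → i + 2 ≤ 0 + n →
    sB n i * sB n (i + 1) * sB n i = sB n (i + 1) * sB n i * sB n (i + 1) := by
  intro i _ h2
  rw [sB_eq (by omega), sB_eq (by omega)]
  exact braidB (by simp) (by simp; omega)

lemma hcB : ∀ i j, 0 ≤ i → i + 2 ≤ j → j < 0 + n → sB n i * sB n j = sB n j * sB n i := by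
  intro i j _ h2 h3
  rw [sB_eq (by omega), sB_eq (by omega)]
  exact commB (by simp; omega)

/-- commutation of `r_{n+1}` with small generators -/
lemma comm_last {j : ℕ} (h : j + 2 ≤ n) : sB n n * sB n j = sB n j * sB n n := by
  rw [sB_eq (le_refl n), sB_eq (by omega)]
  exact (commB (by simp; omega)).symm

lemma rhoB_eq : ρB n = cp (sB n) 0 (n + 1) := by
  unfold ρB cp
  congr 1
  apply List.ext_getElem (by simp)
  intro k h1 h2
  simp only [List.getElem_ofFn, List.getElem_map, List.getElem_range']
  rw [sB_eq (by simp only [List.length_ofFn] at h1; omega)]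
  congr 1
  apply Fin.ext
  simp only [List.length_ofFn] at h1
  simp

lemma delta_conj {i : ℕ} (hi : i + 2 ≤ n) :
    cp (sB n) 0 n * sB n i = sB n (i + 1) * cp (sB n) 0 n :=
  cp_conj hbB hcB (by omega) (by omega)

lemma rho_conj {i : ℕ} (hi : i + 2 ≤ n) :
    ρB n * sB n i = sB n (i + 1) * ρB n := by
  rw [rhoB_eq, cp_succ' (sB n) 0 n]
  calc cp (sB n) 0 n * sB n (0 + n) * sB n i
      = cp (sB n) 0 n * (sB n (0 + n) * sB n i) := by rw [mul_assoc]
    _ = cp (sB n) 0 n * (sB n i * sB n (0 + n)) := by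
        rw [Nat.zero_add]; rw [comm_last hi]
    _ = cp (sB n) 0 n * sB n i * sB n (0 + n) := by rw [mul_assoc]
    _ = sB n (i + 1) * cp (sB n) 0 n * sB n (0 + n) := by rw [delta_conj hi]
    _ = sB n (i + 1) * (cp (sB n) 0 n * sB n (0 + n)) := by rw [mul_assoc]

lemma abstract_rho {G : Type*} [Group G] (W a b e C : G)
    (h4 : b * a * b * a = a * b * a * b) (hbW : b * W = W * b)
    (f5 : W * a * W = C * (W * a)) (f6 : W * a = e * C) :
    W * a * b * (W * a * b) * a = e * (W * a * b * (W * a * b)) := by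
  have key : e * (W * a * W) = W * a * (W * a) := by rw [f5, ← mul_assoc, ← f6]
  have hL : W * a * b * (W * a * b) * a = W * a * W * a * (b * a * b) := by
    calc W * a * b * (W * a * b) * a = W * a * (b * W) * (a * b * a) := by group
      _ = W * a * (W * b) * (a * b * a) := by rw [hbW]
      _ = W * a * W * (b * a * b * a) := by group
      _ = W * a * W * (a * b * a * b) := by rw [h4]
      _ = W * a * W * a * (b * a * b) := by group
  have hR : e * (W * a * b * (W * a * b)) = W * a * W * a * (b * a * b) := by
    calc e * (W * a * b * (W * a * b)) = e * (W * a * (b * W) * (a * b)) := by group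
      _ = e * (W * a * (W * b) * (a * b)) := by rw [hbW]
      _ = e * (W * a * W) * (b * a * b) := by group
      _ = W * a * (W * a) * (b * a * b) := by rw [key]
      _ = W * a * W * a * (b * a * b) := by group
  rw [hL, hR]

lemma fourB' (hn : 1 ≤ n) :
    sB n (n - 1) * sB n n * sB n (n - 1) * sB n n =
    sB n n * sB n (n - 1) * sB n n * sB n (n - 1) := by
  rw [sB_eq (show n - 1 ≤ n from by omega), sB_eq (le_refl n)]
  exact fourB hn

lemma key2 (hn : 2 ≤ n) :
    ρB n * ρB n * sB n (n - 1) = sB n 0 * (ρB n * ρB n) := by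
  obtain ⟨m, rfl⟩ : ∃ m, n = m + 2 := ⟨n - 2, by omega⟩
  rw [show m + 2 - 1 = m + 1 from by omega]
  have h4 : sB (m+2) (m+2) * sB (m+2) (m+1) * sB (m+2) (m+2) * sB (m+2) (m+1) =
      sB (m+2) (m+1) * sB (m+2) (m+2) * sB (m+2) (m+1) * sB (m+2) (m+2) := by
    have := (fourB' (n := m + 2) (by omega)).symm
    rwa [show m + 2 - 1 = m + 1 from by omega] at this
  have hbW : sB (m+2) (m+2) * cp (sB (m+2)) 0 (m+1) =
      cp (sB (m+2)) 0 (m+1) * sB (m+2) (m+2) :=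
    cp_comm (fun j (hj : 0 ≤ j) (hj2 : j < 0 + (m + 1)) => comm_last (by omega))
  have f5 : cp (sB (m+2)) 0 (m+2) * cp (sB (m+2)) 0 (m+1) =
      cp (sB (m+2)) (0+1) (m+1) * cp (sB (m+2)) 0 (m+2) :=
    cp_mul_cp hbB hcB (by omega)
  have f6 : cp (sB (m+2)) 0 (m+1+1) = sB (m+2) 0 * cp (sB (m+2)) (0+1) (m+1) :=
    cp_succ (sB (m+2)) 0 (m+1)
  have e1 : cp (sB (m+2)) 0 (m+1+1) = cp (sB (m+2)) 0 (m+1) * sB (m+2) (0 + (m+1)) :=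
    cp_succ' (sB (m+2)) 0 (m+1)
  rw [show m+1+1 = m+2 from rfl] at f6 e1
  simp only [Nat.zero_add] at hbW f5 f6 e1
  rw [e1] at f5 f6
  rw [rhoB_eq, cp_succ' (sB (m+2)) 0 (m+2), e1]
  simp only [Nat.zero_add]
  exact abstract_rho _ _ _ _ _ h4 hbW f5 f6
end ArtinFacts
end Stmt15Aux

namespace Stmt15Aux
section Phi
variable {n : ℕ}

lemma val_succ (i : Fin (n + 1)) :
    ((i + 1 : Fin (n + 1)) : ℕ) = if (i : ℕ) = n then 0 else (i : ℕ) + 1 := by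
  rw [Fin.val_add_one]
  by_cases h : i = Fin.last n
  · simp [h]
  · rw [if_neg h, if_neg (by simpa [Fin.ext_iff] using h)]

lemma braidB' {i : ℕ} (h : i + 1 < n) :
    sB n i * sB n (i + 1) * sB n i = sB n (i + 1) * sB n i * sB n (i + 1) :=
  hbB i (by omega) (by omega)

lemma commB' {i j : ℕ} (h1 : i + 2 ≤ j) (h2 : j ≤ n) :
    sB n i * sB n j = sB n j * sB n i := by
  rw [sB_eq (show i ≤ n from by omega), sB_eq h2]
  exact commB (show i + 2 ≤ j from h1)

lemma rcyc_zero'' (hn : 1 ≤ n) : rcyc n 0 = ρB n * sB n (n - 1) * (ρB n)⁻¹ := by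
  rw [sB_eq (show n - 1 ≤ n from by omega)]
  simp [rcyc]

lemma rcyc_eq_sB {i : Fin (n + 1)} (h : (i : ℕ) ≠ 0) : rcyc n i = sB n ((i : ℕ) - 1) := by
  rw [sB_eq (show (i : ℕ) - 1 ≤ n from by omega)]
  exact dif_neg h

lemma rho_rcyc (hn : 2 ≤ n) (i : Fin (n + 1)) :
    ρB n * rcyc n i = rcyc n (i + 1) * ρB n := by
  rcases Nat.eq_zero_or_pos (i : ℕ) with h0 | h1
  · have hi : i = 0 := Fin.ext (by simpa using h0)
    subst hi
    have hv : ((0 + 1 : Fin (n + 1)) : ℕ) = 1 := by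
      rw [val_succ]
      rw [if_neg (show ¬((0 : Fin (n+1)) : ℕ) = n from by rw [Fin.val_zero]; omega), Fin.val_zero]
    rw [rcyc_zero'' (by omega), rcyc_eq_sB (by rw [hv]; omega),
      show ((0 + 1 : Fin (n + 1)) : ℕ) - 1 = 0 from by rw [hv]]
    have hk := key2 (n := n) hn
    calc ρB n * (ρB n * sB n (n - 1) * (ρB n)⁻¹)
        = (ρB n * ρB n * sB n (n - 1)) * (ρB n)⁻¹ := by group
      _ = (sB n 0 * (ρB n * ρB n)) * (ρB n)⁻¹ := by rw [hk]
      _ = sB n 0 * ρB n := by group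
  · rcases Nat.lt_or_ge (i : ℕ) n with h2 | h2
    · have hv : ((i + 1 : Fin (n + 1)) : ℕ) = (i : ℕ) + 1 := by
        rw [val_succ, if_neg (by omega)]
      rw [rcyc_eq_sB (by omega), rcyc_eq_sB (by rw [hv]; omega),
        show ((i + 1 : Fin (n + 1)) : ℕ) - 1 = (i : ℕ) from by (rw [hv]; omega)]
      have h3 := rho_conj (n := n) (i := (i : ℕ) - 1) (by omega)
      rwa [show (i : ℕ) - 1 + 1 = (i : ℕ) from by omega] at h3
    · have hvn : (i : ℕ) = n := by omega
      have he : (i + 1 : Fin (n + 1)) = 0 := Fin.ext (by rw [val_succ, if_pos hvn]; rfl)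
      rw [rcyc_eq_sB (by omega), he, rcyc_zero'' (by omega),
        show (i : ℕ) - 1 = n - 1 from by rw [hvn]]
      group

lemma braid_rcyc (hn : 2 ≤ n) (i : Fin (n + 1)) :
    rcyc n i * rcyc n (i + 1) * rcyc n i = rcyc n (i + 1) * rcyc n i * rcyc n (i + 1) := by
  have push : ∀ x y z : Fin (n + 1),
      ρB n * (rcyc n x * rcyc n y * rcyc n z) =
        rcyc n (x + 1) * rcyc n (y + 1) * rcyc n (z + 1) * ρB n := by
    intro x y z
    rw [show ρB n * (rcyc n x * rcyc n y * rcyc n z) =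
        ρB n * rcyc n x * rcyc n y * rcyc n z from by group, rho_rcyc hn x,
      show rcyc n (x + 1) * ρB n * rcyc n y * rcyc n z =
        rcyc n (x + 1) * (ρB n * rcyc n y) * rcyc n z from by group, rho_rcyc hn y,
      show rcyc n (x + 1) * (rcyc n (y + 1) * ρB n) * rcyc n z =
        rcyc n (x + 1) * rcyc n (y + 1) * (ρB n * rcyc n z) from by group, rho_rcyc hn z]
    group
  have hstep : ∀ i : Fin (n + 1),
      (rcyc n i * rcyc n (i + 1) * rcyc n i = rcyc n (i + 1) * rcyc n i * rcyc n (i + 1)) →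
      (rcyc n (i + 1) * rcyc n (i + 1 + 1) * rcyc n (i + 1) =
        rcyc n (i + 1 + 1) * rcyc n (i + 1) * rcyc n (i + 1 + 1)) := by
    intro i E
    apply mul_right_cancel (b := ρB n)
    rw [← push i (i + 1) i, ← push (i + 1) i (i + 1), E]
  have hbase : ∀ i : Fin (n + 1), 1 ≤ (i : ℕ) → (i : ℕ) ≤ n - 1 →
      rcyc n i * rcyc n (i + 1) * rcyc n i = rcyc n (i + 1) * rcyc n i * rcyc n (i + 1) := by
    intro i hi1 hi2
    have hv : ((i + 1 : Fin (n + 1)) : ℕ) = (i : ℕ) + 1 := by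
      rw [val_succ, if_neg (by omega)]
    rw [rcyc_eq_sB (by omega), rcyc_eq_sB (by rw [hv]; omega),
      show ((i + 1 : Fin (n + 1)) : ℕ) - 1 = (i : ℕ) from by (rw [hv]; omega)]
    have hb := braidB' (n := n) (i := (i : ℕ) - 1) (by omega)
    rwa [show (i : ℕ) - 1 + 1 = (i : ℕ) from by omega] at hb
  have hn1 := hbase ⟨n - 1, by omega⟩ (show 1 ≤ n - 1 from by omega)
    (show n - 1 ≤ n - 1 from le_refl _)
  have hrnEq : (⟨n - 1, by omega⟩ + 1 : Fin (n + 1)) = ⟨n, by omega⟩ := by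
    apply Fin.ext
    rw [val_succ, if_neg (show ¬ n - 1 = n from by omega)]
    show n - 1 + 1 = n
    omega
  have hrn := hstep _ hn1
  rw [hrnEq] at hrn
  have hr0Eq : (⟨n, by omega⟩ + 1 : Fin (n + 1)) = 0 := by
    apply Fin.ext
    rw [val_succ, if_pos rfl]
    rfl
  have hr0 := hstep _ hrn
  rw [hr0Eq] at hr0
  rcases Nat.eq_zero_or_pos (i : ℕ) with h0 | hp
  · rwa [show i = 0 from Fin.ext (by simpa using h0)]
  · rcases Nat.lt_or_ge (i : ℕ) n with h2 | h2
    · exact hbase i hp (by omega)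
    · rwa [show i = ⟨n, by omega⟩ from Fin.ext (show (i : ℕ) = n from by
        have := i.isLt; omega)]

lemma comm_rcyc (hn : 2 ≤ n) : ∀ i j : Fin (n + 1), j ≠ i + 1 → i ≠ j + 1 → i ≠ j →
    rcyc n i * rcyc n j = rcyc n j * rcyc n i := by
  have push2 : ∀ x y : Fin (n + 1),
      ρB n * (rcyc n x * rcyc n y) = rcyc n (x + 1) * rcyc n (y + 1) * ρB n := by
    intro x y
    rw [show ρB n * (rcyc n x * rcyc n y) = ρB n * rcyc n x * rcyc n y from by group,
      rho_rcyc hn x,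
      show rcyc n (x + 1) * ρB n * rcyc n y = rcyc n (x + 1) * (ρB n * rcyc n y) from by group,
      rho_rcyc hn y, ← mul_assoc]
  have hstep : ∀ x y : Fin (n + 1), rcyc n x * rcyc n y = rcyc n y * rcyc n x →
      rcyc n (x + 1) * rcyc n (y + 1) = rcyc n (y + 1) * rcyc n (x + 1) := by
    intro x y E
    apply mul_right_cancel (b := ρB n)
    rw [← push2 x y, ← push2 y x, E]
  have hbase : ∀ i j : Fin (n + 1), j ≠ i + 1 → i ≠ j + 1 → i ≠ j →
      1 ≤ (i : ℕ) → 1 ≤ (j : ℕ) →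
      rcyc n i * rcyc n j = rcyc n j * rcyc n i := by
    intro i j h1 h2 h3 hi1 hj1
    have hij : (i : ℕ) ≠ (j : ℕ) := fun h => h3 (Fin.ext h)
    have hsep : (i : ℕ) + 2 ≤ (j : ℕ) ∨ (j : ℕ) + 2 ≤ (i : ℕ) := by
      rcases Nat.lt_trichotomy (i : ℕ) (j : ℕ) with h | h | h
      · rcases Nat.lt_or_ge ((i : ℕ) + 1) (j : ℕ) with hlt | hge
        · exact Or.inl (by omega)
        · exact absurd (Fin.ext (by rw [val_succ, if_neg (by omega)]; omega) : j = i + 1) h1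
      · exact absurd h hij
      · rcases Nat.lt_or_ge ((j : ℕ) + 1) (i : ℕ) with hlt | hge
        · exact Or.inr (by omega)
        · exact absurd (Fin.ext (by rw [val_succ, if_neg (by omega)]; omega) : i = j + 1) h2
    rw [rcyc_eq_sB (by omega), rcyc_eq_sB (by omega)]
    rcases hsep with h | h
    · exact commB' (by omega) (by have := j.isLt; omega)
    · exact (commB' (by omega) (by have := i.isLt; omega)).symm
  intro i j h1 h2 h3
  have main : ∀ i j : Fin (n + 1), j ≠ i + 1 → i ≠ j + 1 → i ≠ j → 1 ≤ (j : ℕ) →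
      rcyc n i * rcyc n j = rcyc n j * rcyc n i := by
    intro i j h1 h2 h3 hj1
    rcases Nat.eq_zero_or_pos (i : ℕ) with h0 | hp
    · have hi0 : i = 0 := Fin.ext (by simpa using h0)
      subst hi0
      have hj2 : 2 ≤ (j : ℕ) := by
        have hne1 : (j : ℕ) ≠ 1 := by
          intro hv1
          apply h1
          apply Fin.ext
          rw [val_succ]
          rw [if_neg (show ¬((0 : Fin (n+1)) : ℕ) = n from by rw [Fin.val_zero]; omega), Fin.val_zero]
          omega
        omega
      have hjn : (j : ℕ) ≤ n - 1 := by
        rcases Nat.lt_or_ge (j : ℕ) n with h | h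
        · omega
        · have hjv : (j : ℕ) = n := by have := j.isLt; omega
          exact absurd (Fin.ext (by rw [val_succ, if_pos hjv]; rfl) : (0 : Fin (n+1)) = j + 1)
            h2
      have hjlt : (j : ℕ) - 1 < n + 1 := by omega
      set jm : Fin (n + 1) := ⟨(j : ℕ) - 1, hjlt⟩ with hjm
      set iN : Fin (n + 1) := ⟨n, by omega⟩ with hiN
      have e1 : iN + 1 = 0 := by
        apply Fin.ext
        rw [val_succ, if_pos rfl]
        rfl
      have e2 : jm + 1 = j := by
        apply Fin.ext
        rw [val_succ, if_neg (show ¬ (j : ℕ) - 1 = n from by omega)]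
        show (j : ℕ) - 1 + 1 = (j : ℕ)
        omega
      have c1 : jm ≠ iN + 1 := by
        rw [e1]
        intro hh
        have : (j : ℕ) - 1 = 0 := congrArg Fin.val hh
        omega
      have c2 : iN ≠ jm + 1 := by
        rw [e2]
        intro hh
        have : n = (j : ℕ) := congrArg Fin.val hh
        omega
      have c3 : iN ≠ jm := by
        intro hh
        have : n = (j : ℕ) - 1 := congrArg Fin.val hh
        omega
      have hb := hbase iN jm c1 c2 c3 (show 1 ≤ n from by omega)
        (show 1 ≤ (j : ℕ) - 1 from by omega)
      have := hstep iN jm hb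
      rwa [e1, e2] at this
    · exact hbase i j h1 h2 h3 hp hj1
  rcases Nat.eq_zero_or_pos (j : ℕ) with hj0 | hj1
  · have hip : 1 ≤ (i : ℕ) := by
      rcases Nat.eq_zero_or_pos (i : ℕ) with h | h
      · exact absurd (Fin.ext (by omega) : i = j) h3
      · exact h
    exact (main j i h2 h1 (fun h => h3 h.symm) hip).symm
  · exact main i j h1 h2 h3 hj1

/-- The Kent–Peifer homomorphism `A[Ã_n] → A[B_{n+1}]`. -/
noncomputable def phi (hn : 2 ≤ n) : ArtinA n →* ArtinB n :=
  PresentedGroup.toGroup (f := rcyc n) (by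
    intro r hr
    rcases hr with ⟨i, rfl⟩ | ⟨i, j, h1, h2, h3, rfl⟩
    · simp only [map_mul, map_inv, FreeGroup.lift_apply_of]
      rw [mul_inv_eq_one]
      exact braid_rcyc hn i
    · simp only [map_mul, map_inv, FreeGroup.lift_apply_of]
      rw [mul_inv_eq_one]
      exact comm_rcyc hn i j h1 h2 h3)

@[simp] lemma phi_tA (hn : 2 ≤ n) (i : Fin (n + 1)) : phi hn (tA n i) = rcyc n i :=
  PresentedGroup.toGroup.of _

end Phi
end Stmt15Aux

namespace Stmt15Aux
section Tau
variable {n : ℕ}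

lemma mk_add_one {u : ℕ} (h : u + 1 ≤ n) :
    (⟨u, by omega⟩ : Fin (n + 1)) + 1 = ⟨u + 1, by omega⟩ :=
  Fin.ext (by rw [val_succ, if_neg (show ¬u = n from by omega)])

noncomputable def tauh (n : ℕ) : ArtinA n →* ArtinA n :=
  PresentedGroup.toGroup (f := fun i => tA n (i + 1)) (by
    intro r hr
    rcases hr with ⟨i, rfl⟩ | ⟨i, j, h1, h2, h3, rfl⟩
    · simp only [map_mul, map_inv, FreeGroup.lift_apply_of]
      rw [mul_inv_eq_one]
      exact braidA (i + 1)
    · simp only [map_mul, map_inv, FreeGroup.lift_apply_of]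
      rw [mul_inv_eq_one]
      exact commA (fun h => h1 (add_right_cancel h))
        (fun h => h2 (add_right_cancel h)) (fun h => h3 (add_right_cancel h)))

noncomputable def tauinvh (n : ℕ) : ArtinA n →* ArtinA n :=
  PresentedGroup.toGroup (f := fun i => tA n (i - 1)) (by
    intro r hr
    rcases hr with ⟨i, rfl⟩ | ⟨i, j, h1, h2, h3, rfl⟩
    · simp only [map_mul, map_inv, FreeGroup.lift_apply_of]
      rw [mul_inv_eq_one, add_sub_cancel_right]
      have := braidA (n := n) (i - 1)
      rwa [sub_add_cancel] at this
    · simp only [map_mul, map_inv, FreeGroup.lift_apply_of]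
      rw [mul_inv_eq_one]
      refine commA ?_ ?_ ?_
      · intro h
        rw [sub_add_cancel] at h
        exact h1 (by rw [← h, sub_add_cancel])
      · intro h
        rw [sub_add_cancel] at h
        exact h2 (by rw [← h, sub_add_cancel])
      · intro h
        apply h3
        have := congrArg (· + 1) h
        simpa [sub_add_cancel] using this)

@[simp] lemma tauh_tA (i : Fin (n + 1)) : tauh n (tA n i) = tA n (i + 1) :=
  PresentedGroup.toGroup.of _

@[simp] lemma tauinvh_tA (i : Fin (n + 1)) : tauinvh n (tA n i) = tA n (i - 1) :=
  PresentedGroup.toGroup.of _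

noncomputable def tau (n : ℕ) : MulAut (ArtinA n) :=
  MonoidHom.toMulEquiv (tauh n) (tauinvh n)
    (by
      apply PresentedGroup.ext
      intro x
      show tauinvh n (tauh n (tA n x)) = tA n x
      rw [tauh_tA, tauinvh_tA, add_sub_cancel_right])
    (by
      apply PresentedGroup.ext
      intro x
      show tauh n (tauinvh n (tA n x)) = tA n x
      rw [tauinvh_tA, tauh_tA, sub_add_cancel])

@[simp] lemma tau_tA (i : Fin (n + 1)) : tau n (tA n i) = tA n (i + 1) := tauh_tA i

@[simp] lemma tau_inv_tA (i : Fin (n + 1)) : (tau n)⁻¹ (tA n i) = tA n (i - 1) := by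
  rw [MulAut.inv_def]
  exact tauinvh_tA i

lemma tau_zpow (k : ℤ) (i : Fin (n + 1)) :
    (tau n ^ k) (tA n i) = tA n (i + (k : Fin (n + 1))) := by
  induction k using Int.induction_on generalizing i with
  | zero => simp
  | succ m ih =>
    rw [zpow_add_one, MulAut.mul_apply, tau_tA, ih]
    congr 1
    push_cast
    ring
  | pred m ih =>
    rw [zpow_sub_one, MulAut.mul_apply, tau_inv_tA, ih]
    congr 1
    push_cast
    ring

end Tau

section Xi
variable {n : ℕ}

noncomputable def xiB (n : ℕ) : ArtinB n →* Multiplicative ℤ :=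
  PresentedGroup.toGroup (rels := BRels n)
    (f := fun (i : Fin (n + 1)) => Multiplicative.ofAdd (if (i : ℕ) = n then (1 : ℤ) else 0)) (by
    intro r hr
    rcases hr with (⟨i, j, h1, h2, rfl⟩ | ⟨hg, rfl⟩) | ⟨i, j, h, rfl⟩
    · simp only [map_mul, map_inv, FreeGroup.lift_apply_of]
      rw [if_neg (show ¬(i : ℕ) = n from by omega), if_neg (show ¬(j : ℕ) = n from by omega)]
      group
    · simp only [map_mul, map_inv, FreeGroup.lift_apply_of]
      rw [if_neg (show ¬((⟨n - 1, by omega⟩ : Fin (n + 1)) : ℕ) = n from by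
          show ¬n - 1 = n; omega)]
      simp
    · simp only [map_mul, map_inv, FreeGroup.lift_apply_of]
      rw [show Multiplicative.ofAdd (if (i : ℕ) = n then (1 : ℤ) else 0) *
          Multiplicative.ofAdd (if (j : ℕ) = n then 1 else 0) =
          Multiplicative.ofAdd (if (j : ℕ) = n then 1 else 0) *
          Multiplicative.ofAdd (if (i : ℕ) = n then 1 else 0) from mul_comm _ _]
      group)

lemma xiB_rB (i : Fin (n + 1)) :
    xiB n (rB n i) = Multiplicative.ofAdd (if (i : ℕ) = n then 1 else 0) :=
  PresentedGroup.toGroup.of _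

lemma cp_const_one {G : Type*} [Group G] (a l : ℕ) : cp (fun _ => (1 : G)) a l = 1 := by
  induction l with
  | zero => simp
  | succ l ih => rw [cp_succ', ih, mul_one]

lemma xiB_sB {j : ℕ} (h : j < n) : xiB n (sB n j) = 1 := by
  rw [sB_eq (by omega), xiB_rB, if_neg (show ¬j = n from by omega)]
  rfl

lemma xiB_rho : xiB n (ρB n) = Multiplicative.ofAdd 1 := by
  rw [rhoB_eq, cp_succ', map_mul, cp_map]
  rw [cp_congr (s' := fun _ => (1 : Multiplicative ℤ))
    (fun j hj hj2 => xiB_sB (by omega)), cp_const_one, one_mul, Nat.zero_add,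
    sB_eq (le_refl n), xiB_rB, if_pos rfl]

lemma xiB_phi (hn : 2 ≤ n) (x : ArtinA n) : xiB n (phi hn x) = 1 := by
  have : (xiB n).comp (phi hn) = 1 := by
    apply PresentedGroup.ext
    intro i
    show xiB n (phi hn (tA n i)) = 1
    rw [phi_tA]
    rcases Nat.eq_zero_or_pos (i : ℕ) with h0 | h1
    · rw [show i = 0 from Fin.ext (by simpa using h0), rcyc_zero'' (by omega), map_mul, map_mul,
        map_inv, xiB_sB (by omega), mul_one, mul_inv_cancel]
    · rw [rcyc_eq_sB (by omega), xiB_sB (by have := i.isLt; omega)]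
  exact DFunLike.congr_fun this x

end Xi

section Sigma
variable {n : ℕ}

noncomputable def sA (n : ℕ) : ℕ → ArtinA n :=
  fun j => tA n ⟨j % (n + 1), Nat.mod_lt _ (by omega)⟩

lemma sA_eq {j : ℕ} (h : j ≤ n) : sA n j = tA n ⟨j, by omega⟩ := by
  unfold sA
  congr 1
  exact Fin.ext (by simp [Nat.mod_eq_of_lt (by omega : j < n + 1)])

lemma succ_mod (hn : 1 ≤ n) (j : ℕ) :
    (⟨(j + 1) % (n + 1), Nat.mod_lt _ (by omega)⟩ : Fin (n + 1)) =
      ⟨j % (n + 1), Nat.mod_lt _ (by omega)⟩ + 1 := by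
  have hlt : j % (n + 1) < n + 1 := Nat.mod_lt _ (by omega)
  have h1 : (j + 1) % (n + 1) = (j % (n + 1) + 1) % (n + 1) := by
    conv_lhs => rw [Nat.add_mod]
    rw [Nat.mod_eq_of_lt (show 1 < n + 1 from by omega)]
  apply Fin.ext
  rw [val_succ]
  show (j + 1) % (n + 1) = if j % (n + 1) = n then 0 else j % (n + 1) + 1
  by_cases h : j % (n + 1) = n
  · rw [if_pos h, h1, h, Nat.mod_self]
  · rw [if_neg h, h1, Nat.mod_eq_of_lt (by omega)]

lemma tau_sA (hn : 1 ≤ n) (j : ℕ) : tau n (sA n j) = sA n (j + 1) := by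
  unfold sA
  rw [tau_tA, succ_mod hn]

lemma tau_apply (x : ArtinA n) : tau n x = tauh n x := rfl

lemma tauh_sA (hn : 1 ≤ n) (j : ℕ) : tauh n (sA n j) = sA n (j + 1) := by
  rw [← tau_apply, tau_sA hn]

/-- `v = t₁ t₂ ⋯ t_n`. -/
noncomputable def vA (n : ℕ) : ArtinA n := cp (sA n) 1 n

lemma hbA {i : ℕ} (h1 : 1 ≤ i) (h2 : i + 1 ≤ n) :
    sA n i * sA n (i + 1) * sA n i = sA n (i + 1) * sA n i * sA n (i + 1) := by
  rw [sA_eq (by omega), sA_eq (by omega), ← mk_add_one (by omega)]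
  exact braidA _

lemma commA' {u v : ℕ} (h1 : 1 ≤ u) (h2 : u + 2 ≤ v) (h3 : v ≤ n) :
    sA n u * sA n v = sA n v * sA n u := by
  rw [sA_eq (by omega), sA_eq h3]
  refine commA ?_ ?_ ?_
  · intro h
    have := congrArg Fin.val h
    rw [val_succ] at this
    revert this
    show ¬v = if u = n then 0 else u + 1
    rw [if_neg (by omega)]
    omega
  · intro h
    have := congrArg Fin.val h
    rw [val_succ] at this
    revert this
    show ¬u = if v = n then 0 else v + 1
    by_cases hv : v = n
    · rw [if_pos hv]
      omega
    · rw [if_neg hv]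
      omega
  · intro h
    have : u = v := congrArg Fin.val h
    omega

end Sigma
end Stmt15Aux

namespace Stmt15Aux
section Sig
open SemidirectProduct
variable {n : ℕ}

lemma cp_unshift {G : Type*} [Group G] (s : ℕ → G) (a l : ℕ) :
    cp (fun j => s (j - 1)) (a + 1) l = cp s a l := by
  induction l with
  | zero => simp
  | succ l ih =>
    rw [cp_succ', cp_succ', ih, show a + 1 + l - 1 = a + l from by omega]

lemma cp_unshift1 {G : Type*} [Group G] (s : ℕ → G) (l : ℕ) :
    cp (fun j => s (j - 1)) 1 l = cp s 0 l := by
  have := cp_unshift s 0 l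
  rwa [Nat.zero_add] at this

noncomputable def piZ (n : ℕ) : Multiplicative ℤ →* MulAut (ArtinA n) :=
  zpowersHom _ (tau n)

abbrev GG (n : ℕ) := SemidirectProduct (ArtinA n) (Multiplicative ℤ) (piZ n)

noncomputable def zG (n : ℕ) : GG n := inr (Multiplicative.ofAdd 1)

lemma piZ_one : piZ n (Multiplicative.ofAdd 1) = tau n := by
  rw [piZ, zpowersHom_apply]
  exact zpow_one _

lemma z_inl (x : ArtinA n) : zG n * inl x = inl (tau n x) * zG n := by
  have h := SemidirectProduct.inl_aut (φ := piZ n) (Multiplicative.ofAdd 1) x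
  rw [piZ_one] at h
  rw [zG, h, map_inv]
  group

noncomputable def sigF (n : ℕ) : Fin (n + 1) → GG n := fun i =>
  if (i : ℕ) = n then (inl (vA n))⁻¹ * zG n else inl (sA n ((i : ℕ) + 1))

lemma sigF_ne {i : Fin (n + 1)} (h : (i : ℕ) ≠ n) :
    sigF n i = inl (sA n ((i : ℕ) + 1)) := if_neg h

lemma sigF_top {i : Fin (n + 1)} (h : (i : ℕ) = n) :
    sigF n i = (inl (vA n))⁻¹ * zG n := if_pos h

lemma hbA' (hn : 2 ≤ n) : ∀ i, 1 ≤ i → i + 2 ≤ 1 + n →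
    sA n i * sA n (i + 1) * sA n i = sA n (i + 1) * sA n i * sA n (i + 1) :=
  fun i h1 h2 => hbA h1 (by omega)

lemma hcA' (hn : 2 ≤ n) : ∀ i j, 1 ≤ i → i + 2 ≤ j → j < 1 + n →
    sA n i * sA n j = sA n j * sA n i :=
  fun i j h1 h2 h3 => commA' h1 h2 (by omega)

lemma vA_conj (hn : 2 ≤ n) {i : ℕ} (h1 : 1 ≤ i) (h2 : i + 2 ≤ 1 + n) :
    vA n * sA n i = sA n (i + 1) * vA n :=
  cp_conj (hbA' hn) (hcA' hn) h1 h2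

lemma inl_mul_inlz (x y : ArtinA n) :
    inl x * (inl y * zG n) = (inl (x * y) : GG n) * zG n := by
  rw [← mul_assoc, ← map_mul]

lemma inlz_mul_inl (x y : ArtinA n) :
    (inl x * zG n) * inl y = (inl (x * tau n y) : GG n) * zG n := by
  rw [mul_assoc, z_inl, ← mul_assoc, ← map_mul]

lemma inlz_mul_inlz (x y : ArtinA n) :
    (inl x * zG n) * (inl y * zG n) = (inl (x * tau n y) : GG n) * (zG n * zG n) := by
  calc (inl x * zG n) * (inl y * zG n) = ((inl x * zG n) * inl y) * zG n := by group
    _ = (inl (x * tau n y) * zG n) * zG n := by rw [inlz_mul_inl]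
    _ = inl (x * tau n y) * (zG n * zG n) := by group

lemma inlzz_mul_inl (x y : ArtinA n) :
    (inl x * (zG n * zG n)) * inl y =
      (inl (x * tau n (tau n y)) : GG n) * (zG n * zG n) := by
  calc (inl x * (zG n * zG n)) * inl y = inl x * (zG n * (zG n * inl y)) := by group
    _ = inl x * (zG n * (inl (tau n y) * zG n)) := by rw [z_inl]
    _ = inl x * ((zG n * inl (tau n y)) * zG n) := by group
    _ = inl x * ((inl (tau n (tau n y)) * zG n) * zG n) := by rw [z_inl]
    _ = (inl x * inl (tau n (tau n y))) * (zG n * zG n) := by group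
    _ = inl (x * tau n (tau n y)) * (zG n * zG n) := by rw [← map_mul]

lemma tau_vA (hn : 2 ≤ n) : tau n (vA n) = cp (sA n) 2 n := by
  show tauh n (vA n) = cp (sA n) 2 n
  rw [vA, cp_map]
  rw [cp_congr (s' := fun j => sA n (j + 1)) (fun j hj hj2 => tauh_sA (by omega) j),
    cp_shift]

lemma sA_top_succ (hn : 1 ≤ n) : sA n (n + 1) = tA n 0 := by
  unfold sA
  congr 1
  apply Fin.ext
  show (n + 1) % (n + 1) = ((0 : Fin (n + 1)) : ℕ)
  simp

lemma sA_wrap (hn : 1 ≤ n) : sA n (n + 2) = sA n 1 := by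
  unfold sA
  congr 1
  apply Fin.ext
  show (n + 2) % (n + 1) = 1 % (n + 1)
  rw [show n + 2 = (n + 1) + 1 from by omega, Nat.add_mod_left]

lemma star_eq (hn : 2 ≤ n) :
    sA n n * (vA n)⁻¹ * tau n (sA n n) * tau n ((vA n)⁻¹) =
      (vA n)⁻¹ * tau n (sA n n) * tau n ((vA n)⁻¹) * tau n (tau n (sA n n)) := by
  obtain ⟨m, rfl⟩ : ∃ m, n = m + 2 := ⟨n - 2, by omega⟩
  have hty : tau (m+2) (sA (m+2) (m+2)) = sA (m+2) (m+2+1) := tau_sA (by omega) (m+2)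
  have htty : tau (m+2) (tau (m+2) (sA (m+2) (m+2))) = sA (m+2) 1 := by
    rw [hty, tau_sA (by omega), show m+2+1+1 = m+2+2 from rfl, sA_wrap (by omega)]
  have htv : tau (m+2) ((vA (m+2))⁻¹) = (cp (sA (m+2)) 2 (m+2))⁻¹ := by
    rw [map_inv, tau_vA hn]
  have hsplit : vA (m+2) = sA (m+2) 1 * cp (sA (m+2)) 2 (m+1) := by
    have := cp_succ (sA (m+2)) 1 (m+1)
    rwa [show m+1+1 = m+2 from rfl] at this
  have hsplit2 : cp (sA (m+2)) 2 (m+2) = cp (sA (m+2)) 2 (m+1) * sA (m+2) (m+2+1) := by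
    have := cp_succ' (sA (m+2)) 2 (m+1)
    rwa [show m+1+1 = m+2 from rfl, show 2+(m+1) = m+2+1 from by omega] at this
  have hu : cp (sA (m+2)) 2 (m+1) = sA (m+2) 2 * cp (sA (m+2)) 3 m := cp_succ (sA (m+2)) 2 m
  have hcomm1 : sA (m+2) 1 * cp (sA (m+2)) 3 m = cp (sA (m+2)) 3 m * sA (m+2) 1 :=
    cp_comm (fun j (hj : 3 ≤ j) (hj2 : j < 3 + m) => commA' (by omega) (by omega) (by omega))
  have hw1 : cp (sA (m+2)) 2 (m+1) * sA (m+2) 1 =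
      sA (m+2) 2 * sA (m+2) 1 * (sA (m+2) 2)⁻¹ * cp (sA (m+2)) 2 (m+1) := by
    calc cp (sA (m+2)) 2 (m+1) * sA (m+2) 1
        = sA (m+2) 2 * (cp (sA (m+2)) 3 m * sA (m+2) 1) := by rw [hu, mul_assoc]
      _ = sA (m+2) 2 * (sA (m+2) 1 * cp (sA (m+2)) 3 m) := by rw [hcomm1]
      _ = sA (m+2) 2 * sA (m+2) 1 * (sA (m+2) 2)⁻¹ * (sA (m+2) 2 * cp (sA (m+2)) 3 m) := by
          group
      _ = sA (m+2) 2 * sA (m+2) 1 * (sA (m+2) 2)⁻¹ * cp (sA (m+2)) 2 (m+1) := by rw [← hu]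
  have hsq : cp (sA (m+2)) 2 (m+1) * cp (sA (m+2)) 2 (m+1) * sA (m+2) (m+2) =
      sA (m+2) 2 * (cp (sA (m+2)) 2 (m+1) * cp (sA (m+2)) 2 (m+1)) := by
    have h := cp_sq (s := sA (m+2)) (a := 2) (l := m + 1)
      (fun i h1 h2 => hbA (by omega) (by omega))
      (fun i j h1 h2 h3 => commA' (by omega) h2 (by omega)) (by omega)
    rwa [show 2 + (m + 1) - 1 = m + 2 from by omega] at h
  have hbr : sA (m+2) 1 * sA (m+2) 2 * sA (m+2) 1 =
      sA (m+2) 2 * sA (m+2) 1 * sA (m+2) 2 := by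
    have := hbA (n := m+2) (i := 1) (by omega) (by omega)
    rwa [show (1 : ℕ) + 1 = 2 from rfl] at this
  have P : cp (sA (m+2)) 2 (m+1) * sA (m+2) 1 * cp (sA (m+2)) 2 (m+1) * sA (m+2) (m+2) =
      sA (m+2) 1 * cp (sA (m+2)) 2 (m+1) * sA (m+2) 1 * cp (sA (m+2)) 2 (m+1) := by
    have hL : cp (sA (m+2)) 2 (m+1) * sA (m+2) 1 * cp (sA (m+2)) 2 (m+1) * sA (m+2) (m+2) =
        sA (m+2) 2 * sA (m+2) 1 * (cp (sA (m+2)) 2 (m+1) * cp (sA (m+2)) 2 (m+1)) := by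
      calc cp (sA (m+2)) 2 (m+1) * sA (m+2) 1 * cp (sA (m+2)) 2 (m+1) * sA (m+2) (m+2)
          = sA (m+2) 2 * sA (m+2) 1 * (sA (m+2) 2)⁻¹ * cp (sA (m+2)) 2 (m+1) *
              cp (sA (m+2)) 2 (m+1) * sA (m+2) (m+2) := by rw [hw1]
        _ = sA (m+2) 2 * sA (m+2) 1 * (sA (m+2) 2)⁻¹ *
              (cp (sA (m+2)) 2 (m+1) * cp (sA (m+2)) 2 (m+1) * sA (m+2) (m+2)) := by group
        _ = sA (m+2) 2 * sA (m+2) 1 * (sA (m+2) 2)⁻¹ *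
              (sA (m+2) 2 * (cp (sA (m+2)) 2 (m+1) * cp (sA (m+2)) 2 (m+1))) := by rw [hsq]
        _ = sA (m+2) 2 * sA (m+2) 1 * (cp (sA (m+2)) 2 (m+1) * cp (sA (m+2)) 2 (m+1)) := by
            group
    have hR : sA (m+2) 1 * cp (sA (m+2)) 2 (m+1) * sA (m+2) 1 * cp (sA (m+2)) 2 (m+1) =
        sA (m+2) 2 * sA (m+2) 1 * (cp (sA (m+2)) 2 (m+1) * cp (sA (m+2)) 2 (m+1)) := by
      calc sA (m+2) 1 * cp (sA (m+2)) 2 (m+1) * sA (m+2) 1 * cp (sA (m+2)) 2 (m+1)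
          = sA (m+2) 1 * (cp (sA (m+2)) 2 (m+1) * sA (m+2) 1) * cp (sA (m+2)) 2 (m+1) := by
            group
        _ = sA (m+2) 1 * (sA (m+2) 2 * sA (m+2) 1 * (sA (m+2) 2)⁻¹ * cp (sA (m+2)) 2 (m+1)) *
              cp (sA (m+2)) 2 (m+1) := by rw [hw1]
        _ = sA (m+2) 1 * sA (m+2) 2 * sA (m+2) 1 * (sA (m+2) 2)⁻¹ *
              (cp (sA (m+2)) 2 (m+1) * cp (sA (m+2)) 2 (m+1)) := by group
        _ = sA (m+2) 2 * sA (m+2) 1 * sA (m+2) 2 * (sA (m+2) 2)⁻¹ *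
              (cp (sA (m+2)) 2 (m+1) * cp (sA (m+2)) 2 (m+1)) := by rw [hbr]
        _ = sA (m+2) 2 * sA (m+2) 1 * (cp (sA (m+2)) 2 (m+1) * cp (sA (m+2)) 2 (m+1)) := by
            group
    rw [hL, hR]
  have hyP : sA (m+2) (m+2) = (cp (sA (m+2)) 2 (m+1) * sA (m+2) 1 * cp (sA (m+2)) 2 (m+1))⁻¹ *
      (sA (m+2) 1 * cp (sA (m+2)) 2 (m+1) * sA (m+2) 1 * cp (sA (m+2)) 2 (m+1)) := by
    rw [← P]
    group
  rw [htty, hty, htv, hsplit2, hsplit, hyP]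
  group

noncomputable def sig (n : ℕ) (hn : 2 ≤ n) : ArtinB n →* GG n :=
  PresentedGroup.toGroup (rels := BRels n) (f := sigF n) (by
    intro r hr
    rcases hr with (⟨i, j, h1, h2, rfl⟩ | ⟨hg, rfl⟩) | ⟨i, j, h, rfl⟩
    · simp only [map_mul, map_inv, FreeGroup.lift_apply_of]
      rw [mul_inv_eq_one, sigF_ne (show (i : ℕ) ≠ n from by omega),
        sigF_ne (show (j : ℕ) ≠ n from by omega)]
      have hA : sA n ((i : ℕ) + 1) * sA n ((j : ℕ) + 1) * sA n ((i : ℕ) + 1) =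
          sA n ((j : ℕ) + 1) * sA n ((i : ℕ) + 1) * sA n ((j : ℕ) + 1) := by
        rw [show (j : ℕ) + 1 = ((i : ℕ) + 1) + 1 from by omega]
        exact hbA (by omega) (by omega)
      rw [← map_mul, ← map_mul, ← map_mul, ← map_mul]
      exact congrArg _ hA
    · simp only [map_mul, map_inv, FreeGroup.lift_apply_of]
      rw [mul_inv_eq_one,
        sigF_ne (show ((⟨n - 1, by omega⟩ : Fin (n + 1)) : ℕ) ≠ n from by
          show n - 1 ≠ n; omega),
        sigF_top (show ((⟨n, by omega⟩ : Fin (n + 1)) : ℕ) = n from rfl),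
        show ((⟨n - 1, by omega⟩ : Fin (n + 1)) : ℕ) + 1 = n from by show n - 1 + 1 = n; omega]
      set A := (inl (sA n n) : GG n) with hA
      set B := ((inl (vA n))⁻¹ : GG n) * zG n with hB
      have hBinv : ((inl (vA n))⁻¹ : GG n) = inl ((vA n)⁻¹) := (map_inv _ _).symm
      have eL : A * B * A * B =
          inl (sA n n * (vA n)⁻¹ * tau n (sA n n) * tau n ((vA n)⁻¹)) * (zG n * zG n) := by
        rw [hA, hB, hBinv, inl_mul_inlz, inlz_mul_inl, inlz_mul_inlz]
      have eR : B * A * B * A =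
          inl ((vA n)⁻¹ * tau n (sA n n) * tau n ((vA n)⁻¹) * tau n (tau n (sA n n))) *
            (zG n * zG n) := by
        rw [hA, hB, hBinv, inlz_mul_inl, inlz_mul_inlz, inlzz_mul_inl]
      rw [eL, eR, star_eq hn]
    · simp only [map_mul, map_inv, FreeGroup.lift_apply_of]
      rw [mul_inv_eq_one]
      by_cases hj : (j : ℕ) = n
      · rw [sigF_ne (show (i : ℕ) ≠ n from by omega), sigF_top hj]
        have hcomm : sA n ((i : ℕ) + 1) * (vA n)⁻¹ = (vA n)⁻¹ * sA n ((i : ℕ) + 2) := by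
          have E := vA_conj hn (show 1 ≤ (i : ℕ) + 1 from by omega)
            (show (i : ℕ) + 1 + 2 ≤ 1 + n from by omega)
          calc sA n ((i : ℕ) + 1) * (vA n)⁻¹
              = (vA n)⁻¹ * (vA n * sA n ((i : ℕ) + 1)) * (vA n)⁻¹ := by group
            _ = (vA n)⁻¹ * (sA n ((i : ℕ) + 1 + 1) * vA n) * (vA n)⁻¹ := by rw [E]
            _ = (vA n)⁻¹ * sA n ((i : ℕ) + 2) := by group
        calc inl (sA n ((i : ℕ) + 1)) * ((inl (vA n))⁻¹ * zG n)
            = inl (sA n ((i : ℕ) + 1) * (vA n)⁻¹) * zG n := by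
              rw [← map_inv, inl_mul_inlz]
          _ = inl ((vA n)⁻¹ * sA n ((i : ℕ) + 2)) * zG n := by rw [hcomm]
          _ = inl ((vA n)⁻¹ * tau n (sA n ((i : ℕ) + 1))) * zG n := by
              rw [tau_sA (by omega)]
          _ = (inl ((vA n)⁻¹) * zG n) * inl (sA n ((i : ℕ) + 1)) := by rw [inlz_mul_inl]
          _ = ((inl (vA n))⁻¹ * zG n) * inl (sA n ((i : ℕ) + 1)) := by rw [map_inv]
      · rw [sigF_ne (show (i : ℕ) ≠ n from by omega), sigF_ne hj, ← map_mul, ← map_mul]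
        exact congrArg _ (commA' (by omega) (by omega) (by have := j.isLt; omega)))

lemma sig_rB (hn : 2 ≤ n) (i : Fin (n + 1)) : sig n hn (rB n i) = sigF n i :=
  PresentedGroup.toGroup.of _

lemma sig_delta (hn : 2 ≤ n) : sig n hn (cp (sB n) 0 n) = inl (vA n) := by
  rw [cp_map]
  rw [cp_congr (s' := fun j => inl (sA n (j + 1))) (fun j hj hj2 => by
    rw [sB_eq (show j ≤ n from by omega), sig_rB hn, sigF_ne (show j ≠ n from by omega)]),
    ← cp_map (inl : ArtinA n →* GG n) (fun j => sA n (j + 1)) 0 n, cp_shift, ← vA]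

lemma sig_rho (hn : 2 ≤ n) : sig n hn (ρB n) = zG n := by
  rw [rhoB_eq, cp_succ', map_mul, sig_delta hn, Nat.zero_add, sB_eq (le_refl n),
    sig_rB hn, sigF_top rfl]
  group

lemma sig_phi (hn : 2 ≤ n) (x : ArtinA n) : sig n hn (phi hn x) = inl x := by
  have h : (sig n hn).comp (phi hn) = (inl : ArtinA n →* GG n) := by
    apply PresentedGroup.ext
    intro i
    show sig n hn (phi hn (tA n i)) = inl (tA n i)
    rw [phi_tA]
    rcases Nat.eq_zero_or_pos (i : ℕ) with h0 | h1
    · rw [show i = 0 from Fin.ext (by simpa using h0), rcyc_zero'' (by omega),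
        map_mul, map_mul, map_inv, sig_rho hn, sB_eq (show n - 1 ≤ n from by omega),
        sig_rB hn, sigF_ne (show n - 1 ≠ n from by omega),
        show n - 1 + 1 = n from by omega]
      calc zG n * inl (sA n n) * (zG n)⁻¹ = inl (tau n (sA n n)) * zG n * (zG n)⁻¹ := by
            rw [z_inl]
        _ = inl (tau n (sA n n)) := by group
        _ = inl (tA n 0) := by rw [tau_sA (by omega), sA_top_succ (by omega)]
    · rw [rcyc_eq_sB (by omega), sB_eq (show (i : ℕ) - 1 ≤ n from by omega), sig_rB hn,
        sigF_ne (show (i : ℕ) - 1 ≠ n from by have := i.isLt; omega),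
        show (i : ℕ) - 1 + 1 = (i : ℕ) from by omega, sA_eq (by have := i.isLt; omega)]
  exact DFunLike.congr_fun h x

lemma phi_inj (hn : 2 ≤ n) : Function.Injective (phi hn) := by
  intro a b hab
  have : (inl (φ := piZ n)) a = inl b := by
    rw [← sig_phi hn a, ← sig_phi hn b, hab]
  exact inl_injective this

lemma phi_conj (hn : 2 ≤ n) (x : ArtinA n) :
    ρB n * phi hn x * (ρB n)⁻¹ = phi hn (tau n x) := by
  have h : ((MulAut.conj (ρB n)).toMonoidHom.comp (phi hn)) =
      (phi hn).comp (tau n).toMonoidHom := by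
    apply PresentedGroup.ext
    intro i
    show ρB n * phi hn (tA n i) * (ρB n)⁻¹ = phi hn (tau n (tA n i))
    rw [phi_tA, tau_tA, phi_tA, rho_rcyc hn i]
    group
  exact DFunLike.congr_fun h x

lemma phi_conj_inv (hn : 2 ≤ n) (x : ArtinA n) :
    (ρB n)⁻¹ * phi hn x * ρB n = phi hn ((tau n)⁻¹ x) := by
  have h2 := phi_conj hn ((tau n)⁻¹ x)
  have h3 : tau n ((tau n)⁻¹ x) = x := by
    rw [MulAut.inv_def]
    exact (tau n).apply_symm_apply x
  rw [h3] at h2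
  rw [← h2]
  group

lemma phi_conj_zpow (hn : 2 ≤ n) (k : ℤ) (x : ArtinA n) :
    ρB n ^ k * phi hn x * (ρB n ^ k)⁻¹ = phi hn ((tau n ^ k) x) := by
  induction k using Int.induction_on generalizing x with
  | zero => simp
  | succ m ih =>
    rw [zpow_add_one, zpow_add_one]
    calc ρB n ^ (m : ℤ) * ρB n * phi hn x * (ρB n ^ (m : ℤ) * ρB n)⁻¹
        = ρB n ^ (m : ℤ) * (ρB n * phi hn x * (ρB n)⁻¹) * (ρB n ^ (m : ℤ))⁻¹ := by group
      _ = ρB n ^ (m : ℤ) * phi hn (tau n x) * (ρB n ^ (m : ℤ))⁻¹ := by rw [phi_conj hn]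
      _ = phi hn ((tau n ^ (m : ℤ)) (tau n x)) := ih _
      _ = phi hn ((tau n ^ (m : ℤ) * tau n) x) := by rw [MulAut.mul_apply]
  | pred m ih =>
    rw [zpow_sub_one, zpow_sub_one]
    calc ρB n ^ (-m : ℤ) * (ρB n)⁻¹ * phi hn x * (ρB n ^ (-m : ℤ) * (ρB n)⁻¹)⁻¹
        = ρB n ^ (-m : ℤ) * ((ρB n)⁻¹ * phi hn x * ρB n) * (ρB n ^ (-m : ℤ))⁻¹ := by group
      _ = ρB n ^ (-m : ℤ) * phi hn ((tau n)⁻¹ x) * (ρB n ^ (-m : ℤ))⁻¹ := by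
          rw [phi_conj_inv hn]
      _ = phi hn ((tau n ^ (-m : ℤ)) ((tau n)⁻¹ x)) := ih _
      _ = phi hn ((tau n ^ (-m : ℤ) * (tau n)⁻¹) x) := by rw [MulAut.mul_apply]

lemma phi_rho_zpow (hn : 2 ≤ n) (k : ℤ) (x : ArtinA n) :
    ρB n ^ k * phi hn x = phi hn ((tau n ^ k) x) * ρB n ^ k := by
  have := phi_conj_zpow hn k x
  rw [← this]
  group

lemma phi_vA (hn : 2 ≤ n) : phi hn (vA n) = cp (sB n) 0 n := by
  rw [vA, cp_map]
  rw [cp_congr (s' := fun j => sB n (j - 1)) (fun j hj hj2 => by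
    rw [sA_eq (show j ≤ n from by omega), phi_tA,
      rcyc_eq_sB (show ((⟨j, by omega⟩ : Fin (n + 1)) : ℕ) ≠ 0 from by show j ≠ 0; omega)]),
    cp_unshift1]

/-- decomposition `h = φ(g) ρ^{ξ(h)}` -/
lemma decomp (hn : 2 ≤ n) (h : ArtinB n) :
    ∃ g : ArtinA n, h = phi hn g * ρB n ^ (Multiplicative.toAdd (xiB n h)) := by
  let S : Subgroup (ArtinB n) :=
    { carrier := {h | ∃ g : ArtinA n, h = phi hn g * ρB n ^ (Multiplicative.toAdd (xiB n h))}
      one_mem' := ⟨1, by simp⟩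
      mul_mem' := by
        rintro x y ⟨g1, hg1⟩ ⟨g2, hg2⟩
        have hxy : Multiplicative.toAdd (xiB n (x * y)) =
            Multiplicative.toAdd (xiB n x) + Multiplicative.toAdd (xiB n y) := by
          rw [map_mul, toAdd_mul]
        set k1 := Multiplicative.toAdd (xiB n x) with hk1
        set k2 := Multiplicative.toAdd (xiB n y) with hk2
        refine ⟨g1 * (tau n ^ k1) g2, ?_⟩
        show x * y = phi hn (g1 * (tau n ^ k1) g2) * ρB n ^ (Multiplicative.toAdd (xiB n (x * y)))
        rw [hxy, zpow_add, map_mul]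
        calc x * y = phi hn g1 * (ρB n ^ k1 * phi hn g2) * ρB n ^ k2 := by
              rw [hg1, hg2]; group
          _ = phi hn g1 * (phi hn ((tau n ^ k1) g2) * ρB n ^ k1) * ρB n ^ k2 := by
              rw [phi_rho_zpow hn]
          _ = phi hn g1 * phi hn ((tau n ^ k1) g2) * (ρB n ^ k1 * ρB n ^ k2) := by group
      inv_mem' := by
        rintro x ⟨g, hg⟩
        have hxi : Multiplicative.toAdd (xiB n x⁻¹) = -Multiplicative.toAdd (xiB n x) := by
          rw [map_inv, toAdd_inv]
        set k1 := Multiplicative.toAdd (xiB n x) with hk1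
        refine ⟨(tau n ^ (-k1)) g⁻¹, ?_⟩
        show x⁻¹ = phi hn ((tau n ^ (-k1)) g⁻¹) * ρB n ^ (Multiplicative.toAdd (xiB n x⁻¹))
        rw [hxi]
        calc x⁻¹ = ρB n ^ (-k1) * phi hn g⁻¹ := by
              rw [hg, map_inv]; group
          _ = phi hn ((tau n ^ (-k1)) g⁻¹) * ρB n ^ (-k1) := by rw [phi_rho_zpow hn] }
  have hS : ∀ h : ArtinB n, h ∈ S := by
    intro h
    apply PresentedGroup.generated_by
    intro j
    show ∃ g : ArtinA n, _
    by_cases hj : (j : ℕ) = n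
    · refine ⟨(vA n)⁻¹, ?_⟩
      have hjF : j = ⟨n, by omega⟩ := Fin.ext hj
      have hx : xiB n (PresentedGroup.of (rels := BRels n) j) = Multiplicative.ofAdd 1 := by
        rw [show (PresentedGroup.of (rels := BRels n) j) = rB n j from rfl, xiB_rB, if_pos hj]
      rw [hx, map_inv, phi_vA hn]
      rw [show (PresentedGroup.of (rels := BRels n) j) = rB n j from rfl, hjF,
        ← sB_eq (le_refl n)]
      have hrho : ρB n = cp (sB n) 0 n * sB n n := by
        rw [rhoB_eq, cp_succ', Nat.zero_add]
      rw [show Multiplicative.toAdd (Multiplicative.ofAdd (1 : ℤ)) = 1 from rfl, zpow_one,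
        hrho]
      group
    · refine ⟨tA n (j + 1), ?_⟩
      have hx : xiB n (PresentedGroup.of (rels := BRels n) j) = 1 := by
        rw [show (PresentedGroup.of (rels := BRels n) j) = rB n j from rfl, xiB_rB, if_neg hj]
        rfl
      rw [hx, phi_tA]
      have hv : ((j + 1 : Fin (n + 1)) : ℕ) = (j : ℕ) + 1 := by
        rw [val_succ, if_neg hj]
      rw [rcyc_eq_sB (by rw [hv]; omega), show ((j + 1 : Fin (n + 1)) : ℕ) - 1 = (j : ℕ) from
        by (rw [hv]; omega), sB_eq (by have := j.isLt; omega)]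
      simp only [toAdd_one, zpow_zero, mul_one]
      show rB n j = rB n ⟨(j : ℕ), by omega⟩
      exact congrArg _ (Fin.eta j _).symm
  exact hS h

lemma mem_range_of_xi_one (hn : 2 ≤ n) {h : ArtinB n} (hx : xiB n h = 1) :
    ∃ g : ArtinA n, h = phi hn g := by
  obtain ⟨g, hg⟩ := decomp hn h
  rw [hx] at hg
  exact ⟨g, by simpa using hg⟩

end Sig
end Stmt15Aux

namespace Stmt15Aux
section Main
open Subgroup
variable {n : ℕ}

lemma conj_hom_comp {G H : Type*} [Group G] [Group H] (f : G →* H) (g : G) :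
    f.comp (MulAut.conj g).toMonoidHom = (MulAut.conj (f g)).toMonoidHom.comp f := by
  ext x
  simp [MulAut.conj_apply]

lemma map_conjSub {G H : Type*} [Group G] [Group H] (f : G →* H) (g : G) (K : Subgroup G) :
    Subgroup.map f (Subgroup.map (MulAut.conj g).toMonoidHom K) =
      Subgroup.map (MulAut.conj (f g)).toMonoidHom (Subgroup.map f K) := by
  rw [Subgroup.map_map, Subgroup.map_map, conj_hom_comp]

lemma conjSub_conjSub {G : Type*} [Group G] (g h : G) (K : Subgroup G) :
    Subgroup.map (MulAut.conj g).toMonoidHom (Subgroup.map (MulAut.conj h).toMonoidHom K) =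
      Subgroup.map (MulAut.conj (g * h)).toMonoidHom K := by
  rw [Subgroup.map_map]
  congr 1
  ext x
  simp [MulAut.conj_apply, mul_assoc]

lemma conjSub_one {G : Type*} [Group G] (K : Subgroup G) :
    Subgroup.map (MulAut.conj (1 : G)).toMonoidHom K = K := by
  have : (MulAut.conj (1 : G)).toMonoidHom = MonoidHom.id G := by
    ext x
    simp
  rw [this, Subgroup.map_id]

lemma conjSub_top {G : Type*} [Group G] (g : G) :
    Subgroup.map (MulAut.conj g).toMonoidHom (⊤ : Subgroup G) = ⊤ :=
  Subgroup.map_top_of_surjective _ (MulAut.conj g).surjective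

lemma image_tA (hn : 2 ≤ n) (X : Set (Fin (n + 1))) :
    (phi hn) '' (tA n '' X) = rcyc n '' X := by
  rw [Set.image_image]
  exact Set.image_congr (fun i _ => phi_tA hn i)

lemma conj_rho_closure (hn : 2 ≤ n) (k : ℤ) (X : Set (Fin (n + 1))) :
    Subgroup.map (MulAut.conj (ρB n ^ k)).toMonoidHom (closure (rcyc n '' X)) =
      closure (rcyc n '' ((fun i => i + ((k : ℤ) : Fin (n + 1))) '' X)) := by
  rw [MonoidHom.map_closure, Set.image_image, Set.image_image]
  congr 1
  apply Set.image_congr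
  intro i _
  show (MulAut.conj (ρB n ^ k)).toMonoidHom (rcyc n i) = rcyc n (i + ((k : ℤ) : Fin (n + 1)))
  rw [MulEquiv.coe_toMonoidHom, MulAut.conj_apply, ← phi_tA hn, phi_conj_zpow hn, tau_zpow,
    phi_tA]

/-- `i ↦ i - 1` on indices, as natural subtraction on values. -/
def pm1 (n : ℕ) : Fin (n + 1) → Fin (n + 1) := fun i => ⟨(i : ℕ) - 1, by omega⟩

lemma image_rcyc {X : Set (Fin (n + 1))} (hX : ∀ i ∈ X, (i : ℕ) ≠ 0) :
    rcyc n '' X = rB n '' (pm1 n '' X) := by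
  rw [Set.image_image]
  exact Set.image_congr (fun i hi =>
    (rcyc_eq_sB (hX i hi)).trans (sB_eq (by omega)))

lemma rcyc_succ_eq_rB {y : Fin (n + 1)} (hy : (y : ℕ) ≠ n) : rcyc n (y + 1) = rB n y := by
  have hv : ((y + 1 : Fin (n + 1)) : ℕ) = (y : ℕ) + 1 := by rw [val_succ, if_neg hy]
  rw [rcyc_eq_sB (by rw [hv]; omega), show ((y + 1 : Fin (n + 1)) : ℕ) - 1 = (y : ℕ) from by
    (rw [hv]; omega), sB_eq (by have := y.isLt; omega)]

lemma image_rB {Y : Set (Fin (n + 1))} (hY : ∀ y ∈ Y, (y : ℕ) ≠ n) :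
    rB n '' Y = rcyc n '' ((fun y => y + 1) '' Y) := by
  rw [Set.image_image]
  exact (Set.image_congr (fun y hy => rcyc_succ_eq_rB (hY y hy))).symm

lemma closure_tA_univ : closure (tA n '' (Set.univ : Set (Fin (n + 1)))) = ⊤ := by
  rw [Set.image_univ]
  have : Set.range (tA n) = Set.range (PresentedGroup.of (rels := ARels n)) := rfl
  rw [this, PresentedGroup.closure_range_of]

lemma parabolicB_of_phi (hn : 2 ≤ n) (g : ArtinA n) (X : Set (Fin (n + 1)))
    (hX : X ≠ Set.univ) :
    IsParabolicB n (Subgroup.map (phi hn)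
      (Subgroup.map (MulAut.conj g).toMonoidHom (closure (tA n '' X)))) := by
  obtain ⟨a, ha⟩ := (Set.ne_univ_iff_exists_notMem X).1 hX
  set k : ℤ := -((a : ℕ) : ℤ) with hk
  have hkF : ((k : ℤ) : Fin (n + 1)) = -a := by
    rw [hk]
    push_cast
    rfl
  have hX1 : ∀ i ∈ (fun i => i + ((k : ℤ) : Fin (n + 1))) '' X, (i : ℕ) ≠ 0 := by
    rintro _ ⟨x, hx, rfl⟩ h0
    have hzero : x + ((k : ℤ) : Fin (n + 1)) = 0 := Fin.ext (by simpa using h0)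
    rw [hkF] at hzero
    have : x = a := by
      have := congrArg (· + a) hzero
      simpa using this
    exact ha (this ▸ hx)
  have e1 : Subgroup.map (phi hn) (Subgroup.map (MulAut.conj g).toMonoidHom
      (closure (tA n '' X))) =
      Subgroup.map (MulAut.conj (phi hn g)).toMonoidHom (closure (rcyc n '' X)) := by
    rw [map_conjSub, MonoidHom.map_closure, image_tA hn]
  have e2 := conj_rho_closure hn k X
  have e3 : closure (rcyc n '' X) =
      Subgroup.map (MulAut.conj (ρB n ^ (-k))).toMonoidHom
        (closure (rcyc n '' ((fun i => i + ((k : ℤ) : Fin (n + 1))) '' X))) := by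
    rw [← e2, conjSub_conjSub, show ρB n ^ (-k) * ρB n ^ k = 1 from by
      rw [← zpow_add, neg_add_cancel, zpow_zero], conjSub_one]
  rw [e1, e3, conjSub_conjSub, image_rcyc hX1]
  exact ⟨phi hn g * ρB n ^ (-k), pm1 n '' ((fun i => i + ((k : ℤ) : Fin (n + 1))) '' X), rfl⟩

end Main
end Stmt15Aux


/-- If the intersection of any two parabolic subgroups of `A[B_{n+1}]` is parabolic,
then the intersection of any two parabolic subgroups of `A[Ã_n]` is parabolic. -/
theorem stmt15 (n : ℕ) (hn : 2 ≤ n)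
    (hB : ∀ P Q : Subgroup (ArtinB n), IsParabolicB n P → IsParabolicB n Q →
      IsParabolicB n (P ⊓ Q)) :
    ∀ P Q : Subgroup (ArtinA n), IsParabolicA n P → IsParabolicA n Q →
      IsParabolicA n (P ⊓ Q) := by
  classical
  open Stmt15Aux Subgroup in
  intro P Q hP hQ
  obtain ⟨g, X, rfl⟩ := hP
  obtain ⟨g', X', rfl⟩ := hQ
  by_cases hXu : X = Set.univ
  · have htop : Subgroup.map (MulAut.conj g).toMonoidHom (closure (tA n '' X)) = ⊤ := by
      rw [hXu, closure_tA_univ, conjSub_top]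
    rw [htop, top_inf_eq]
    exact ⟨g', X', rfl⟩
  by_cases hXu' : X' = Set.univ
  · have htop : Subgroup.map (MulAut.conj g').toMonoidHom (closure (tA n '' X')) = ⊤ := by
      rw [hXu', closure_tA_univ, conjSub_top]
    rw [htop, inf_top_eq]
    exact ⟨g, X, rfl⟩
  have hP1 := parabolicB_of_phi hn g X hXu
  have hQ1 := parabolicB_of_phi hn g' X' hXu'
  obtain ⟨h, Y, hR⟩ := hB _ _ hP1 hQ1
  have hY : ∀ y ∈ Y, (y : ℕ) ≠ n := by
    intro y hy hyn
    have hmem : h * rB n y * h⁻¹ ∈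
        Subgroup.map (phi hn) (Subgroup.map (MulAut.conj g).toMonoidHom
          (closure (tA n '' X))) := by
      have : h * rB n y * h⁻¹ ∈
          Subgroup.map (phi hn) (Subgroup.map (MulAut.conj g).toMonoidHom
            (closure (tA n '' X))) ⊓
          Subgroup.map (phi hn) (Subgroup.map (MulAut.conj g').toMonoidHom
            (closure (tA n '' X'))) := by
        rw [hR]
        exact Subgroup.mem_map.2 ⟨rB n y,
          Subgroup.subset_closure (Set.mem_image_of_mem _ hy), by simp [MulAut.conj_apply]⟩
      exact this.1
    obtain ⟨p, _, hpe⟩ := Subgroup.mem_map.1 hmem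
    have hone : xiB n (h * rB n y * h⁻¹) = 1 := by
      rw [← hpe]
      exact xiB_phi hn p
    have heq : xiB n (h * rB n y * h⁻¹) = xiB n (rB n y) := by
      rw [map_mul, map_mul, map_inv, mul_comm (xiB n h) (xiB n (rB n y)),
        mul_inv_cancel_right]
    rw [heq, xiB_rB, if_pos hyn] at hone
    simpa using hone
  set k : ℤ := Multiplicative.toAdd (xiB n h) with hk
  obtain ⟨g0, hg0⟩ := decomp hn h
  rw [← hk] at hg0
  refine ⟨g0, (fun i => i + ((k : ℤ) : Fin (n + 1))) ''
    ((fun y => y + 1) '' Y), ?_⟩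
  have hmain : Subgroup.map (phi hn) (Subgroup.map (MulAut.conj g).toMonoidHom
        (closure (tA n '' X))) ⊓
      Subgroup.map (phi hn) (Subgroup.map (MulAut.conj g').toMonoidHom
        (closure (tA n '' X'))) =
      Subgroup.map (phi hn) (Subgroup.map (MulAut.conj g0).toMonoidHom
        (closure (tA n '' ((fun i => i + ((k : ℤ) :
          Fin (n + 1))) '' ((fun y => y + 1) '' Y))))) := by
    rw [hR, image_rB hY, hg0, ← conjSub_conjSub (phi hn g0)
      (ρB n ^ k), conj_rho_closure hn, map_conjSub,
      MonoidHom.map_closure (phi hn), image_tA hn]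
  have hfinal := hmain
  rw [← Subgroup.map_inf _ _ _ (phi_inj hn)] at hfinal
  exact Subgroup.map_injective (phi_inj hn) hfinal
end
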